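/- There exists a convergent partition sequence {𝒯_k} of T such that 𝒞_k ⊆ 𝒯_k for all positive integers k; that is, each 𝒯_k is a finite family of pairwise disjoint compact subsets of T whose union is T, 𝒯_{k+1} refines 𝒯_k, max_{A∈𝒯_k} diam A → 0 as k → ∞, and every set C_i^k with |i| + j = k belongs to 𝒯_k. -/

import Mathlib

noncomputable section

open Set Metric MeasureTheory

/-- Distance between two sets. -/
def setDist {X : Type*} [MetricSpace X] (A B : Set X) : ℝ := sInf (Set.image2 dist A B)

/-- Lipschitz equivalence of two sets: a bi-Lipschitz bijection between them. -/
def LipEquivOn {X Y : Type*} [MetricSpace X] [MetricSpace Y] (E : Set X) (F : Set Y) : Prop :=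
  ∃ (f : X → Y) (c c' : ℝ), 0 < c ∧ c ≤ c' ∧ Set.BijOn f E F ∧
    ∀ x ∈ E, ∀ y ∈ E, c * dist x y ≤ dist (f x) (f y) ∧ dist (f x) (f y) ≤ c' * dist x y

/-- The affine contraction `x ↦ ρ i * x + t i`. -/
def affMap (r t : ℕ → ℝ) (i : ℕ) (x : ℝ) : ℝ := r i * x + t i

/-- Composition of the affine maps along a word (first letter outermost). -/
def affWord (r t : ℕ → ℝ) : List ℕ → ℝ → ℝ
  | [] => id
  | i :: w => affMap r t i ∘ affWord r t w

/-- Cylinder of a general IFS for a word over `Fin n`. -/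
def cylW {X : Type*} {n : ℕ} (Ψ : Fin n → X → X) (F : Set X) (w : List (Fin n)) : Set X :=
  (w.foldr (fun i g => Ψ i ∘ g) id) '' F

/-- A (separable) contraction vector `(ρ 0, …, ρ (n-1))` in `ℝ`. -/
structure ContractionVec (n : ℕ) (ρ : ℕ → ℝ) : Prop where
  three_le : 3 ≤ n
  pos : ∀ i, i < n → 0 < ρ i
  lt_one : ∀ i, i < n → ρ i < 1
  sum_lt : (∑ i ∈ Finset.range n, ρ i) < 1

/-- The touching IFS of the standing setup, together with its attractor `T`. -/
structure TouchingIFS (n : ℕ) (ρ : ℕ → ℝ) where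
  t : ℕ → ℝ
  T : Set ℝ
  order : ∀ i, i + 1 < n → affMap ρ t i 1 ≤ affMap ρ t (i + 1) 0
  left0 : affMap ρ t 0 0 = 0
  right1 : affMap ρ t (n - 1) 1 = 1
  touch_ex : ∃ i, i + 1 < n ∧ affMap ρ t i 1 = affMap ρ t (i + 1) 0
  compactT : IsCompact T
  nonemptyT : T.Nonempty
  invT : T = ⋃ i ∈ Finset.range n, affMap ρ t i '' T

/-- The dust-like, equally spaced IFS of the standing setup, with attractor `D`. -/
structure DustIFS (n : ℕ) (ρ : ℕ → ℝ) where
  d : ℕ → ℝ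
  D : Set ℝ
  left0 : affMap ρ d 0 0 = 0
  right1 : affMap ρ d (n - 1) 1 = 1
  equal_gap : ∀ i, i + 1 < n →
    affMap ρ d (i + 1) 0 - affMap ρ d i 1 = (1 - ∑ j ∈ Finset.range n, ρ j) / (n - 1)
  compactD : IsCompact D
  nonemptyD : D.Nonempty
  invD : D = ⋃ i ∈ Finset.range n, affMap ρ d i '' D

variable {n : ℕ} {ρ : ℕ → ℝ}

/-- Cylinder `T_w`. -/
def TouchingIFS.cyl (S : TouchingIFS n ρ) (w : List ℕ) : Set ℝ := affWord ρ S.t w '' S.T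

/-- `i` is a (left) touching letter. -/
def TouchingIFS.touch (S : TouchingIFS n ρ) (i : ℕ) : Prop :=
  i + 1 < n ∧ affMap ρ S.t i 1 = affMap ρ S.t (i + 1) 0

/-- Left touching patch `L_k(T_w)` (with `α` the initial touching run length). -/
def TouchingIFS.patchL (S : TouchingIFS n ρ) (α : ℕ) (w : List ℕ) (k : ℕ) : Set ℝ :=
  ⋃ j ∈ Finset.range α, S.cyl (w ++ List.replicate k 0 ++ [j])

/-- Right touching patch `R_k(T_w)` (with `β` the final touching run length). -/
def TouchingIFS.patchR (S : TouchingIFS n ρ) (β : ℕ) (w : List ℕ) (k : ℕ) : Set ℝ :=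
  ⋃ j ∈ Finset.Ico (n - β) n, S.cyl (w ++ List.replicate k (n - 1) ++ [j])

/-- `α` is the number of successive touching intervals at the beginning. -/
def TouchingIFS.alphaRun (S : TouchingIFS n ρ) (α : ℕ) : Prop :=
  1 ≤ α ∧ α < n ∧ (∀ i, i + 1 < α → S.touch i) ∧ ¬ S.touch (α - 1)

/-- `β` is the number of successive touching intervals at the end. -/
def TouchingIFS.betaRun (S : TouchingIFS n ρ) (β : ℕ) : Prop :=
  1 ≤ β ∧ β < n ∧ (∀ i, n - β ≤ i → i + 1 < n → S.touch i) ∧ ¬ S.touch (n - β - 1)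

/-- Cylinder `D_w`. -/
def DustIFS.cyl (Q : DustIFS n ρ) (w : List ℕ) : Set ℝ := affWord ρ Q.d w '' Q.D

/-- Left patch `L_k(D_w)`. -/
def DustIFS.patchL (Q : DustIFS n ρ) (α : ℕ) (w : List ℕ) (k : ℕ) : Set ℝ :=
  ⋃ j ∈ Finset.range α, Q.cyl (w ++ List.replicate k 0 ++ [j])

/-- Right patch `R_k(D_w)`. -/
def DustIFS.patchR (Q : DustIFS n ρ) (β : ℕ) (w : List ℕ) (k : ℕ) : Set ℝ :=
  ⋃ j ∈ Finset.Ico (n - β) n, Q.cyl (w ++ List.replicate k (n - 1) ++ [j])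

/-- `τ k` is the unique positive integer with `ρₙᵏ ρ₁ < ρ₁ ^ τ(k) ≤ ρₙᵏ`. -/
def tauSpec (ρ : ℕ → ℝ) (n : ℕ) (τ : ℕ → ℕ) : Prop :=
  ∀ k, 1 ≤ k → 1 ≤ τ k ∧ ρ (n - 1) ^ k * ρ 0 < ρ 0 ^ τ k ∧ ρ 0 ^ τ k ≤ ρ (n - 1) ^ k

/-- `Cᵏ = R_k(T_{i₀}) ∪ L_{τ(k)}(T_{i₀+1})`. -/
def Cset (S : TouchingIFS n ρ) (α β i₀ : ℕ) (τ : ℕ → ℕ) (k : ℕ) : Set ℝ :=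
  S.patchR β [i₀] k ∪ S.patchL α [i₀ + 1] (τ k)

/-- The touching letter `i` is left substitutable. -/
def TouchingIFS.LeftSub (S : TouchingIFS n ρ) (α : ℕ) (i : ℕ) : Prop :=
  ∃ (w : List ℕ) (a : ℕ) (k k' : ℕ), (∀ b ∈ w ++ [a], b < n) ∧
    Metric.diam (S.patchL α [i + 1] k) = Metric.diam (S.patchL α (i :: (w ++ [a])) k') ∧
    a ≠ 0 ∧ ∀ ℓ, S.touch ℓ → a ≠ ℓ + 1

/-- The touching letter `i` is right substitutable. -/
def TouchingIFS.RightSub (S : TouchingIFS n ρ) (β : ℕ) (i : ℕ) : Prop :=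
  ∃ (w : List ℕ) (a : ℕ) (k k' : ℕ), (∀ b ∈ w ++ [a], b < n) ∧
    Metric.diam (S.patchR β [i] k) = Metric.diam (S.patchR β ((i + 1) :: (w ++ [a])) k') ∧
    a ≠ n - 1 ∧ ¬ S.touch a

/-- Convex hull of a bounded set of reals: the minimal closed interval containing it. -/
def CH (B : Set ℝ) : Set ℝ := Set.Icc (sInf B) (sSup B)

/-- `[a,b]` is a maximal run of touching letters (a first-level connected component). -/
def TouchingIFS.run (S : TouchingIFS n ρ) (a b : ℕ) : Prop :=
  a ≤ b ∧ b < n ∧ (∀ i, a ≤ i → i < b → S.touch i) ∧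
  (a = 0 ∨ ¬ S.touch (a - 1)) ∧ (b = n - 1 ∨ ¬ S.touch b)

/-- Membership in the class `𝒯⁽¹⁾`: a `T`-separate copy `Ψ_w(T⁽¹⁾_j)`. -/
def TouchingIFS.T1mem (S : TouchingIFS n ρ) (X : Set ℝ) : Prop :=
  ∃ (w : List ℕ) (a b : ℕ), (∀ c ∈ w, c < n) ∧ S.run a b ∧
    X = affWord ρ S.t w '' (⋃ j ∈ Finset.Icc a b, S.cyl [j]) ∧
    0 < setDist X (S.T \ X)

/-- Membership in the class `𝒯⁽²⁾`: a copy `Ψ_w(T⁽²⁾_i) = Ψ_w(R₀(T_i) ∪ L₀(T_{i+1}))`. -/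
def TouchingIFS.T2mem (S : TouchingIFS n ρ) (α β : ℕ) (X : Set ℝ) : Prop :=
  ∃ (w : List ℕ) (i : ℕ), (∀ c ∈ w, c < n) ∧ S.touch i ∧
    X = affWord ρ S.t w '' (S.patchR β [i] 0 ∪ S.patchL α [i + 1] 0)

/-- An admissible family for the simple decomposition of `E` by the `A i`. -/
def GoodFam (E : Set ℝ) {k : ℕ} (A : Fin k → Set ℝ) (𝒮 : Finset (Set ℝ)) : Prop :=
  (∀ B ∈ 𝒮, IsCompact B ∧ B ⊆ E) ∧ (⋃ B ∈ 𝒮, B) = E ∧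
  (∀ B ∈ 𝒮, ∀ B' ∈ 𝒮, B ≠ B' → CH B ∩ CH B' = ∅) ∧ (∀ i, A i ∈ 𝒮)

namespace StatementSix

open Set

variable {n : ℕ} {ρ : ℕ → ℝ}

/-- contraction rate of a word -/
def wrate (ρ : ℕ → ℝ) (w : List ℕ) : ℝ := (w.map ρ).prod

/-- all letters of `w` are legal -/
def Gd (n : ℕ) (w : List ℕ) : Prop := ∀ a ∈ w, a < n

lemma affWord_nil (r t : ℕ → ℝ) (x : ℝ) : affWord r t [] x = x := rfl

lemma affWord_cons (r t : ℕ → ℝ) (a : ℕ) (w : List ℕ) (x : ℝ) :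
    affWord r t (a :: w) x = affMap r t a (affWord r t w x) := rfl

lemma affWord_append (r t : ℕ → ℝ) (u v : List ℕ) (x : ℝ) :
    affWord r t (u ++ v) x = affWord r t u (affWord r t v x) := by
  induction u with
  | nil => rfl
  | cons a u ih => simp [affWord_cons, ih]

lemma wrate_cons (a : ℕ) (w : List ℕ) : wrate ρ (a :: w) = ρ a * wrate ρ w := by
  simp [wrate]

lemma affWord_sub (t : ℕ → ℝ) (w : List ℕ) (x y : ℝ) :
    affWord ρ t w x - affWord ρ t w y = wrate ρ w * (x - y) := by
  induction w with
  | nil => simp [affWord_nil, wrate]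
  | cons a w ih =>
      simp only [affWord_cons, affMap, wrate_cons]
      rw [show ρ a * affWord ρ t w x + t a - (ρ a * affWord ρ t w y + t a)
          = ρ a * (affWord ρ t w x - affWord ρ t w y) by ring, ih]
      ring

section basic
variable (hρ : ContractionVec n ρ)
include hρ

lemma rho_pos {i : ℕ} (h : i < n) : 0 < ρ i := hρ.pos i h
lemma rho_lt_one {i : ℕ} (h : i < n) : ρ i < 1 := hρ.lt_one i h

lemma wrate_pos {w : List ℕ} (hw : Gd n w) : 0 < wrate ρ w := by
  induction w with
  | nil => norm_num [wrate]
  | cons a w ih =>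
      rw [wrate_cons]
      exact mul_pos (hρ.pos a (hw a (by simp))) (ih (fun b hb => hw b (by simp [hb])))

lemma wrate_le_one {w : List ℕ} (hw : Gd n w) : wrate ρ w ≤ 1 := by
  induction w with
  | nil => norm_num [wrate]
  | cons a w ih =>
      rw [wrate_cons]
      have h1 : 0 < wrate ρ w := wrate_pos hρ (fun b hb => hw b (by simp [hb]))
      have h2 : wrate ρ w ≤ 1 := ih (fun b hb => hw b (by simp [hb]))
      nlinarith [hρ.pos a (hw a (by simp)), hρ.lt_one a (hw a (by simp))]

lemma affWord_mono {w : List ℕ} (hw : Gd n w) {t : ℕ → ℝ} {x y : ℝ} (hxy : x ≤ y) :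
    affWord ρ t w x ≤ affWord ρ t w y := by
  have := affWord_sub (ρ := ρ) t w y x
  nlinarith [wrate_pos hρ hw]

lemma affWord_strictMono {w : List ℕ} (hw : Gd n w) {t : ℕ → ℝ} {x y : ℝ} (hxy : x < y) :
    affWord ρ t w x < affWord ρ t w y := by
  have := affWord_sub (ρ := ρ) t w y x
  nlinarith [wrate_pos hρ hw]

lemma affWord_le_rev {w : List ℕ} (hw : Gd n w) {t : ℕ → ℝ} {x y : ℝ}
    (h : affWord ρ t w x ≤ affWord ρ t w y) : x ≤ y := by
  by_contra hc
  exact absurd (affWord_strictMono hρ hw (lt_of_not_ge hc)) (not_lt.2 h)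

lemma affWord_inj {w : List ℕ} (hw : Gd n w) {t : ℕ → ℝ} {x y : ℝ}
    (h : affWord ρ t w x = affWord ρ t w y) : x = y := by
  have := affWord_sub (ρ := ρ) t w x y
  rw [h, sub_self] at this
  have h2 := wrate_pos hρ hw
  have : x - y = 0 := by
    rcases mul_eq_zero.1 this.symm with h3 | h3
    · exact absurd h3 (ne_of_gt h2)
    · exact h3
  linarith

end basic

section ifs
set_option linter.unusedSectionVars false
variable (hρ : ContractionVec n ρ) (S : TouchingIFS n ρ)
include hρ

lemma affMap_one (t : ℕ → ℝ) (i : ℕ) : affMap ρ t i 1 = ρ i + t i := by simp [affMap]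
lemma affMap_zero (t : ℕ → ℝ) (i : ℕ) : affMap ρ t i 0 = t i := by simp [affMap]

lemma t_zero : S.t 0 = 0 := by
  have := S.left0; simpa [affMap] using this

lemma t_top : ρ (n-1) + S.t (n-1) = 1 := by
  have := S.right1; simpa [affMap] using this

lemma t_step {i : ℕ} (h : i + 1 < n) : S.t i + ρ i ≤ S.t (i+1) := by
  have := S.order i h; simp [affMap] at this; linarith

lemma t_chain {i j : ℕ} (hij : i < j) (hj : j < n) : S.t i + ρ i ≤ S.t j := by
  induction j with
  | zero => omega
  | succ j ih =>
      rcases Nat.lt_succ_iff_lt_or_eq.1 hij with h | h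
      · have h1 := ih h (by omega)
        have h2 := t_step hρ S (show j + 1 < n from hj)
        have := hρ.pos j (by omega)
        linarith
      · subst h; exact t_step hρ S hj

lemma t_nonneg {i : ℕ} (hi : i < n) : 0 ≤ S.t i := by
  rcases Nat.eq_zero_or_pos i with h | h
  · subst h; rw [t_zero hρ S]
  · have := t_chain hρ S (show 0 < i from h) hi
    have h0 := t_zero hρ S
    have := hρ.pos 0 (by omega)
    linarith

lemma t_add_le_one {i : ℕ} (hi : i < n) : S.t i + ρ i ≤ 1 := by
  have h3 := hρ.three_le
  rcases Nat.lt_or_ge i (n-1) with h | h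
  · have h1 := t_chain hρ S h (by omega)
    have h2 := t_top hρ S
    have := hρ.pos (n-1) (by omega)
    linarith
  · have : i = n - 1 := by omega
    subst this
    have h2 := t_top hρ S
    linarith

lemma t_mono {i j : ℕ} (hij : i ≤ j) (hj : j < n) : S.t i ≤ S.t j := by
  rcases Nat.lt_or_ge i j with h | h
  · have := t_chain hρ S h hj
    have := hρ.pos i (by omega)
    linarith
  · have : i = j := by omega
    subst this; rfl

/-- interval hulls of distinct first-level maps are order separated -/
lemma hull_sep {b a : ℕ} (hba : b < a) (ha : a < n) : S.t b + ρ b ≤ S.t a :=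
  t_chain hρ S hba ha

lemma map_mem_T {a : ℕ} (ha : a < n) {x : ℝ} (hx : x ∈ S.T) :
    affMap ρ S.t a x ∈ S.T := by
  rw [S.invT]
  exact Set.mem_biUnion (show a ∈ Finset.range n from Finset.mem_range.mpr ha) (mem_image_of_mem _ hx)

lemma word_mem_T {w : List ℕ} (hw : Gd n w) {x : ℝ} (hx : x ∈ S.T) :
    affWord ρ S.t w x ∈ S.T := by
  induction w with
  | nil => simpa [affWord_nil]
  | cons a w ih =>
      rw [affWord_cons]
      exact map_mem_T hρ S (hw a (by simp)) (ih (fun b hb => hw b (by simp [hb])))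

lemma exists_letter {x : ℝ} (hx : x ∈ S.T) :
    ∃ a, a < n ∧ ∃ y ∈ S.T, x = affMap ρ S.t a y := by
  have := S.invT ▸ hx
  rcases mem_iUnion.1 this with ⟨a, ha⟩
  rcases mem_iUnion.1 ha with ⟨han, hmem⟩
  rcases hmem with ⟨y, hy, hxy⟩
  exact ⟨a, by simpa using han, y, hy, hxy.symm⟩

lemma fixed_mem_T {i : ℕ} (hi : i < n) {x : ℝ} (hfix : affMap ρ S.t i x = x) :
    x ∈ S.T := by
  obtain ⟨y, hy⟩ := S.nonemptyT
  set f := affMap ρ S.t i with hf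
  have hmem : ∀ j, f^[j] y ∈ S.T := by
    intro j
    induction j with
    | zero => simpa
    | succ j ih =>
        rw [Function.iterate_succ_apply']
        exact map_mem_T hρ S hi ih
  have hdist : ∀ j, f^[j] y - x = (ρ i)^j * (y - x) := by
    intro j
    induction j with
    | zero => simp
    | succ j ih =>
        rw [Function.iterate_succ_apply']
        have h1 : f (f^[j] y) = ρ i * (f^[j] y) + S.t i := rfl
        have h2 : ρ i * x + S.t i = x := hfix
        rw [h1, pow_succ]
        linear_combination ρ i * ih + h2
  have hpos := hρ.pos i hi
  have hlt := hρ.lt_one i hi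
  have htend : Filter.Tendsto (fun j => f^[j] y) Filter.atTop (nhds x) := by
    have h1 : Filter.Tendsto (fun j : ℕ => (ρ i)^j) Filter.atTop (nhds 0) :=
      tendsto_pow_atTop_nhds_zero_of_lt_one (le_of_lt hpos) hlt
    have h2 : Filter.Tendsto (fun j : ℕ => x + (ρ i)^j * (y - x)) Filter.atTop (nhds (x + 0 * (y - x))) := by
      exact Filter.Tendsto.const_add _ (h1.mul_const _)
    simp only [zero_mul, add_zero] at h2
    convert h2 using 2 with j
    have := hdist j
    linarith
  exact S.compactT.isClosed.mem_of_tendsto htend (Filter.Eventually.of_forall hmem)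

lemma zero_mem_T : (0:ℝ) ∈ S.T := by
  apply fixed_mem_T hρ S (show 0 < n by have := hρ.three_le; omega)
  have := S.left0; simpa using this

lemma one_mem_T : (1:ℝ) ∈ S.T := by
  apply fixed_mem_T hρ S (show n - 1 < n by have := hρ.three_le; omega)
  exact S.right1

lemma T_subset_Icc : S.T ⊆ Icc 0 1 := by
  have hbdd : BddAbove S.T := S.compactT.bddAbove
  have hbdd' : BddBelow S.T := S.compactT.bddBelow
  have hsup : sSup S.T ∈ S.T := S.compactT.sSup_mem S.nonemptyT
  have hinf : sInf S.T ∈ S.T := S.compactT.sInf_mem S.nonemptyT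
  have hsup1 : sSup S.T ≤ 1 := by
    obtain ⟨a, ha, y, hy, hxy⟩ := exists_letter hρ S hsup
    have h1 : y ≤ sSup S.T := le_csSup hbdd hy
    have h2 := hρ.pos a ha
    have h3 := t_add_le_one hρ S ha
    have h4 := t_nonneg hρ S ha
    rw [hxy] at h1 ⊢
    simp only [affMap] at h1 ⊢
    have hy1 : y ≤ 1 := by nlinarith [hρ.lt_one a ha]
    nlinarith
  have hinf0 : 0 ≤ sInf S.T := by
    obtain ⟨a, ha, y, hy, hxy⟩ := exists_letter hρ S hinf
    have h1 : sInf S.T ≤ y := csInf_le hbdd' hy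
    have h2 := hρ.pos a ha
    have h4 := t_nonneg hρ S ha
    have h5 : sInf S.T = ρ a * y + S.t a := hxy
    have h6 : 0 ≤ ρ a * (y - sInf S.T) := mul_nonneg (le_of_lt h2) (by linarith)
    nlinarith [hρ.lt_one a ha]
  intro x hx
  exact ⟨le_trans hinf0 (csInf_le hbdd' hx), le_trans (le_csSup hbdd hx) hsup1⟩

end ifs
end StatementSix
namespace StatementSix
open Set

section main
set_option linter.unusedSectionVars false
set_option maxHeartbeats 1000000
variable {n : ℕ} {ρ : ℕ → ℝ}
variable (hρ : ContractionVec n ρ) (S : TouchingIFS n ρ) (α β i₀ : ℕ)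
  (hα : S.alphaRun α) (hβ : S.betaRun β) (hi₀ : S.touch i₀)
  (hρ1n : ρ (n - 1) ≤ ρ 0) (τ : ℕ → ℕ) (hτ : tauSpec ρ n τ)
include hρ

lemma nge3 : 3 ≤ n := hρ.three_le

include hi₀
lemma i0_lt : i₀ + 1 < n := hi₀.1
lemma ptouch : ρ i₀ + S.t i₀ = S.t (i₀ + 1) := by
  have := hi₀.2; simpa [affMap] using this
omit hi₀

include hα
lemma alpha1 : 1 ≤ α := hα.1
lemma alpha_lt : α < n := hα.2.1

lemma gapA : S.t (α - 1) + ρ (α - 1) < S.t α := by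
  have h1 := hα.1
  have h2 := hα.2.1
  have hnt := hα.2.2.2
  have heq : α - 1 + 1 = α := by omega
  have hle := S.order (α - 1) (by omega)
  simp only [affMap, heq] at hle
  rcases lt_or_eq_of_le hle with h | h
  · linarith
  · exfalso; exact hnt ⟨by omega, by simp [affMap, heq]; linarith⟩

include hi₀
lemma alpha_ne_i0 : α ≠ i₀ + 1 := by
  intro h
  exact hα.2.2.2 (by rw [h]; simpa using hi₀)
omit hi₀ hα

include hβ
lemma beta1 : 1 ≤ β := hβ.1
lemma beta_lt : β < n := hβ.2.1

lemma gapB : S.t (n - β - 1) + ρ (n - β - 1) < S.t (n - β) := by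
  have h1 := hβ.1
  have h2 := hβ.2.1
  have h3 := nge3 hρ
  have hnt := hβ.2.2.2
  have heq : n - β - 1 + 1 = n - β := by omega
  have hle := S.order (n - β - 1) (by omega)
  simp only [affMap, heq] at hle
  rcases lt_or_eq_of_le hle with h | h
  · linarith
  · exfalso; exact hnt ⟨by omega, by simp [affMap, heq]; linarith⟩

include hi₀
lemma i0_ne_beta : i₀ ≠ n - β - 1 := by
  intro h
  exact hβ.2.2.2 (by rw [← h]; exact hi₀)
omit hi₀ hβ

/-- generic level-1 gap: between `i` and `i+1` when they do not touch -/
lemma gap1 {i : ℕ} (hi : i + 1 < n) :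
    S.T ∩ Ioo (S.t i + ρ i) (S.t (i + 1)) = ∅ := by
  ext x
  simp only [mem_inter_iff, mem_Ioo, mem_empty_iff_false, iff_false, not_and]
  intro hx h1 h2
  obtain ⟨b, hb, y, hy, hxy⟩ := exists_letter hρ S hx
  have hy01 := T_subset_Icc hρ S hy
  simp only [mem_Icc] at hy01
  have hxv : x = ρ b * y + S.t b := hxy
  rcases Nat.lt_or_ge b (i + 1) with h | h
  · have hb1 : S.t b + ρ b ≤ S.t i + ρ i := by
      rcases Nat.lt_or_ge b i with hh | hh
      · have := t_chain hρ S hh (by omega)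
        have := hρ.pos i (by omega)
        linarith
      · have : b = i := by omega
        subst this; linarith
    have := hρ.pos b hb
    nlinarith
  · have : S.t (i + 1) ≤ S.t b := t_mono hρ S h hb
    have := hρ.pos b hb
    have := t_nonneg hρ S hb
    nlinarith

lemma affWord_nonneg {w : List ℕ} (hw : Gd n w) {x : ℝ} (hx : 0 ≤ x) :
    0 ≤ affWord ρ S.t w x := by
  induction w with
  | nil => simpa [affWord_nil]
  | cons a w ih =>
      rw [affWord_cons]
      have h1 := ih (fun b hb => hw b (by simp [hb]))
      have h2 := t_nonneg hρ S (hw a (by simp))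
      have h3 := hρ.pos a (hw a (by simp))
      simp only [affMap]
      nlinarith

lemma affWord_pos {w : List ℕ} (hw : Gd n w) {x : ℝ} (hx : 0 < x) :
    0 < affWord ρ S.t w x := by
  induction w with
  | nil => simpa [affWord_nil]
  | cons a w ih =>
      rw [affWord_cons]
      have h1 := ih (fun b hb => hw b (by simp [hb]))
      have h2 := t_nonneg hρ S (hw a (by simp))
      have h3 := hρ.pos a (hw a (by simp))
      simp only [affMap]
      nlinarith

lemma affWord_le_one {w : List ℕ} (hw : Gd n w) {x : ℝ} (hx : x ≤ 1) :
    affWord ρ S.t w x ≤ 1 := by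
  induction w with
  | nil => simpa [affWord_nil]
  | cons a w ih =>
      rw [affWord_cons]
      have h1 := ih (fun b hb => hw b (by simp [hb]))
      have h2 := t_add_le_one hρ S (hw a (by simp))
      have h3 := hρ.pos a (hw a (by simp))
      simp only [affMap]
      nlinarith

lemma affWord_lt_one {w : List ℕ} (hw : Gd n w) {x : ℝ} (hx : x < 1) :
    affWord ρ S.t w x < 1 := by
  induction w with
  | nil => simpa [affWord_nil]
  | cons a w ih =>
      rw [affWord_cons]
      have h1 := ih (fun b hb => hw b (by simp [hb]))
      have h2 := t_add_le_one hρ S (hw a (by simp))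
      have h3 := hρ.pos a (hw a (by simp))
      simp only [affMap]
      nlinarith

/-- one-letter slice lemma -/
lemma slice_map {a : ℕ} (ha : a < n) {c d : ℝ} (hc : 0 < c) (hd : d < 1) :
    S.T ∩ Icc (affMap ρ S.t a c) (affMap ρ S.t a d) =
      affMap ρ S.t a '' (S.T ∩ Icc c d) := by
  ext x
  constructor
  · rintro ⟨hxT, hx1, hx2⟩
    obtain ⟨b, hb, y, hy, hxy⟩ := exists_letter hρ S hxT
    have hy01 := T_subset_Icc hρ S hy
    simp only [mem_Icc] at hy01
    have hxv : x = ρ b * y + S.t b := hxy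
    have hρa := hρ.pos a ha
    have hρb := hρ.pos b hb
    simp only [affMap] at hx1 hx2
    have hba : b = a := by
      rcases Nat.lt_trichotomy b a with h | h | h
      · exfalso
        have := t_chain hρ S h ha
        nlinarith
      · exact h
      · exfalso
        have := t_chain hρ S h hb
        have := t_add_le_one hρ S hb
        nlinarith
    subst hba
    refine ⟨y, ⟨hy, ?_, ?_⟩, hxy.symm⟩
    · nlinarith
    · nlinarith
  · rintro ⟨y, ⟨hyT, hy1, hy2⟩, rfl⟩
    refine ⟨map_mem_T hρ S ha hyT, ?_, ?_⟩ <;>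
      · simp only [affMap]
        have := hρ.pos a ha
        nlinarith

/-- word slice lemma -/
lemma slice_word {w : List ℕ} (hw : Gd n w) {c d : ℝ} (hc : 0 < c) (hd : d < 1) :
    S.T ∩ Icc (affWord ρ S.t w c) (affWord ρ S.t w d) =
      affWord ρ S.t w '' (S.T ∩ Icc c d) := by
  induction w with
  | nil => simp [affWord_nil]; exact (image_id _).symm
  | cons a w ih =>
      have hw' : Gd n w := fun b hb => hw b (by simp [hb])
      have ha : a < n := hw a (by simp)
      rw [affWord_cons, affWord_cons,
        slice_map hρ S ha (affWord_pos hρ S hw' hc) (affWord_lt_one hρ S hw' hd),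
        ih hw']
      rw [← image_comp]
      rfl

/-- words map the fundamental gaps to gaps -/
lemma gap_word {w : List ℕ} (hw : Gd n w) {c d : ℝ} (hc : 0 < c) (hd : d < 1)
    (hcd : c ≤ d) (hgap : S.T ∩ Ioo c d = ∅) :
    S.T ∩ Ioo (affWord ρ S.t w c) (affWord ρ S.t w d) = ∅ := by
  ext x
  simp only [mem_inter_iff, mem_Ioo, mem_empty_iff_false, iff_false, not_and]
  intro hxT h1 h2
  have hx : x ∈ S.T ∩ Icc (affWord ρ S.t w c) (affWord ρ S.t w d) :=
    ⟨hxT, le_of_lt h1, le_of_lt h2⟩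
  rw [slice_word hρ S hw hc hd] at hx
  obtain ⟨y, ⟨hyT, hy1, hy2⟩, rfl⟩ := hx
  have hyc : c < y := by
    by_contra hcon
    have : affWord ρ S.t w y ≤ affWord ρ S.t w c := affWord_mono hρ hw (le_of_not_gt hcon)
    linarith
  have hyd : y < d := by
    by_contra hcon
    have : affWord ρ S.t w d ≤ affWord ρ S.t w y := affWord_mono hρ hw (le_of_not_gt hcon)
    linarith
  have : y ∈ S.T ∩ Ioo c d := ⟨hyT, hyc, hyd⟩
  rw [hgap] at this
  exact this

end main
end StatementSix
namespace StatementSix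
open Set

section main2
set_option linter.unusedSectionVars false
set_option linter.unusedVariables false
set_option maxHeartbeats 1000000
variable {n : ℕ} {ρ : ℕ → ℝ}
variable (hρ : ContractionVec n ρ) (S : TouchingIFS n ρ) (α β i₀ : ℕ)
  (hα : S.alphaRun α) (hβ : S.betaRun β) (hi₀ : S.touch i₀)
  (hρ1n : ρ (n - 1) ≤ ρ 0) (τ : ℕ → ℕ) (hτ : tauSpec ρ n τ)

/-- left end of the right patch at level m (inside T, before applying i₀) -/
def qm (m : ℕ) : ℝ := affWord ρ S.t (List.replicate m (n - 1)) (S.t (n - β))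

/-- right end of the left patch at level j (inside T, before applying i₀+1) -/
def QQ (j : ℕ) : ℝ := affWord ρ S.t (List.replicate j 0) (S.t (α - 1) + ρ (α - 1))

/-- unshifted right patch -/
def Rp (m : ℕ) : Set ℝ := S.patchR β [] m
/-- unshifted left patch -/
def Lp (j : ℕ) : Set ℝ := S.patchL α [] j

lemma qm_zero : qm S β 0 = S.t (n - β) := rfl
lemma qm_succ (m : ℕ) : qm S β (m + 1) = affMap ρ S.t (n - 1) (qm S β m) := by
  simp only [qm, List.replicate_succ, affWord_cons]

lemma QQ_zero : QQ S α 0 = S.t (α - 1) + ρ (α - 1) := rfl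
lemma QQ_succ (j : ℕ) : QQ S α (j + 1) = affMap ρ S.t 0 (QQ S α j) := by
  simp only [QQ, List.replicate_succ, affWord_cons]

include hρ

lemma t1_ge : S.t 0 + ρ 0 ≤ S.t 1 := t_step hρ S (by have := nge3 hρ; omega)

lemma gd_replicate {a m : ℕ} (ha : a < n) : Gd n (List.replicate m a) := by
  intro b hb
  rcases List.eq_of_mem_replicate hb with rfl
  exact ha

include hβ
lemma qm_pos (m : ℕ) : 0 < qm S β m := by
  have h3 := nge3 hρ
  have hb1 := hβ.1
  have hb2 := hβ.2.1
  apply affWord_pos hρ S (gd_replicate hρ (by omega))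
  have h1 : S.t 0 + ρ 0 ≤ S.t (n - β) := t_chain hρ S (by omega) (by omega)
  have h0 := t_zero hρ S
  have := hρ.pos 0 (by omega)
  linarith

lemma qm_ge (m : ℕ) : ρ 0 ≤ qm S β m := by
  have h3 := nge3 hρ
  have hb1 := hβ.1
  have hb2 := hβ.2.1
  have h0 := t_zero hρ S
  have ht1 := t1_ge hρ S
  induction m with
  | zero =>
      rw [qm_zero]
      have : S.t 1 ≤ S.t (n - β) := t_mono hρ S (by omega) (by omega)
      linarith
  | succ m ih =>
      rw [qm_succ]
      simp only [affMap]
      have h1 : S.t 1 ≤ S.t (n - 1) := t_mono hρ S (by omega) (by omega)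
      have h2 := hρ.pos (n-1) (by omega)
      have := qm_pos hρ S β hβ m
      nlinarith

lemma qm_le_one (m : ℕ) : qm S β m ≤ 1 := by
  have h3 := nge3 hρ
  have hb1 := hβ.1
  have hb2 := hβ.2.1
  apply affWord_le_one hρ S (gd_replicate hρ (by omega))
  have := t_add_le_one hρ S (show n - β < n by omega)
  have := hρ.pos (n-β) (by omega)
  linarith

lemma qm_gt (m : ℕ) (hm : 1 ≤ m) : S.t (n - 1) < qm S β m := by
  have h3 := nge3 hρ
  obtain ⟨m', rfl⟩ : ∃ m', m = m' + 1 := ⟨m - 1, by omega⟩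
  rw [qm_succ]
  simp only [affMap]
  have := qm_pos hρ S β hβ m'
  have h2 := hρ.pos (n-1) (by omega)
  nlinarith
omit hβ

include hα
lemma QQ_zero_lt : QQ S α 0 < S.t α := by
  rw [QQ_zero]; exact gapA hρ S α hα

lemma QQ_pos (j : ℕ) : 0 < QQ S α j := by
  have h3 := nge3 hρ
  have ha2 := hα.2.1
  apply affWord_pos hρ S (gd_replicate hρ (by omega))
  have := t_nonneg hρ S (show α - 1 < n by omega)
  have := hρ.pos (α-1) (by omega)
  linarith

lemma QQ_lt_one (j : ℕ) : QQ S α j < 1 := by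
  have h3 := nge3 hρ
  have ha1 := hα.1
  have ha2 := hα.2.1
  apply affWord_lt_one hρ S (gd_replicate hρ (by omega))
  have h1 := QQ_zero_lt hρ S α hα
  rw [QQ_zero] at h1
  have h2 := t_add_le_one hρ S (show α < n by omega)
  have := hρ.pos α (by omega)
  linarith

lemma QQ_succ_lt (j : ℕ) : QQ S α (j + 1) < ρ 0 := by
  have h3 := nge3 hρ
  rw [QQ_succ]
  simp only [affMap]
  have h0 := t_zero hρ S
  have h1 := QQ_lt_one hρ S α hα j
  have h2 := hρ.pos 0 (by omega)
  nlinarith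

lemma QQ_lt_t (j : ℕ) {i : ℕ} (hi : α ≤ i) (hin : i < n) : QQ S α j < S.t i := by
  have h3 := nge3 hρ
  have hαi : S.t α ≤ S.t i := t_mono hρ S hi hin
  cases j with
  | zero => have := QQ_zero_lt hρ S α hα; linarith
  | succ j =>
      have h1 := QQ_succ_lt hρ S α hα j
      have h2 : ρ 0 ≤ S.t 1 := by have := t1_ge hρ S; have := t_zero hρ S; linarith
      have h4 : S.t 1 ≤ S.t α := t_mono hρ S hα.1 (by omega)
      linarith
omit hα

/-- cylinders inside T -/
lemma cyl_subset_T {w : List ℕ} (hw : Gd n w) : S.cyl w ⊆ S.T := by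
  rintro x ⟨y, hy, rfl⟩
  exact word_mem_T hρ S hw hy

omit hρ in
lemma cyl_cons (a : ℕ) (w : List ℕ) : S.cyl (a :: w) = affMap ρ S.t a '' S.cyl w := by
  simp only [TouchingIFS.cyl, ← image_comp]
  rfl

lemma cyl_subset_Icc {w : List ℕ} (hw : Gd n w) :
    S.cyl w ⊆ Icc (affWord ρ S.t w 0) (affWord ρ S.t w 1) := by
  rintro x ⟨y, hy, rfl⟩
  have := T_subset_Icc hρ S hy
  simp only [mem_Icc] at this ⊢
  exact ⟨affWord_mono hρ hw this.1, affWord_mono hρ hw this.2⟩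

omit hρ in
lemma Rp_eq (m : ℕ) :
    Rp S β m = ⋃ j ∈ Finset.Ico (n - β) n, S.cyl (List.replicate m (n - 1) ++ [j]) := by
  simp [Rp, TouchingIFS.patchR]

omit hρ in
lemma Lp_eq (j : ℕ) :
    Lp S α j = ⋃ i ∈ Finset.range α, S.cyl (List.replicate j 0 ++ [i]) := by
  simp [Lp, TouchingIFS.patchL]

omit hρ in
lemma Rp_succ (m : ℕ) : Rp S β (m + 1) = affMap ρ S.t (n - 1) '' Rp S β m := by
  rw [Rp_eq, Rp_eq, image_iUnion₂]
  apply iUnion₂_congr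
  intro j hj
  rw [show List.replicate (m+1) (n-1) ++ [j] = (n-1) :: (List.replicate m (n-1) ++ [j]) by
    simp [List.replicate_succ], cyl_cons]

omit hρ in
lemma Lp_succ (j : ℕ) : Lp S α (j + 1) = affMap ρ S.t 0 '' Lp S α j := by
  rw [Lp_eq, Lp_eq, image_iUnion₂]
  apply iUnion₂_congr
  intro i hi
  rw [show List.replicate (j+1) 0 ++ [i] = 0 :: (List.replicate j 0 ++ [i]) by
    simp [List.replicate_succ], cyl_cons]

include hβ
lemma Rp_subset_T (m : ℕ) : Rp S β m ⊆ S.T := by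
  have h3 := nge3 hρ
  rw [Rp_eq]
  refine iUnion₂_subset fun j hj => cyl_subset_T hρ S ?_
  simp only [Finset.mem_Ico] at hj
  intro b hb
  rcases List.mem_append.1 hb with h | h
  · exact (List.eq_of_mem_replicate h) ▸ (by omega)
  · simp at h; omega
omit hβ

include hα
lemma Lp_subset_T (j : ℕ) : Lp S α j ⊆ S.T := by
  have h3 := nge3 hρ
  have ha2 := hα.2.1
  rw [Lp_eq]
  refine iUnion₂_subset fun i hi => cyl_subset_T hρ S ?_
  simp only [Finset.mem_range] at hi
  intro b hb
  rcases List.mem_append.1 hb with h | h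
  · exact (List.eq_of_mem_replicate h) ▸ (by omega)
  · simp at h; omega
omit hα


include hβ in
/-- slice through the top letter `n-1`, allowing upper endpoint `1` -/
lemma slice_map_top {m : ℕ} (hq0 : 0 < qm S β m) :
    S.T ∩ Icc (affMap ρ S.t (n-1) (qm S β m)) 1 =
      affMap ρ S.t (n-1) '' (S.T ∩ Icc (qm S β m) 1) := by
  have h3 := nge3 hρ
  have h1 : affMap ρ S.t (n-1) 1 = 1 := S.right1
  ext x
  constructor
  · rintro ⟨hxT, hx1, hx2⟩
    obtain ⟨b, hb, y, hy, hxy⟩ := exists_letter hρ S hxT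
    have hy01 := T_subset_Icc hρ S hy
    simp only [mem_Icc] at hy01
    have hxv : x = ρ b * y + S.t b := hxy
    have hρb := hρ.pos b hb
    simp only [affMap] at hx1
    have hba : b = n - 1 := by
      by_contra hcon
      have hblt : b < n - 1 := by omega
      have := t_chain hρ S hblt (by omega)
      have h9 := hρ.pos (n-1) (show n - 1 < n by omega)
      nlinarith
    subst hba
    refine ⟨y, ⟨hy, ?_, hy01.2⟩, hxy.symm⟩
    nlinarith
  · rintro ⟨y, ⟨hyT, hy1, hy2⟩, rfl⟩
    refine ⟨map_mem_T hρ S (show n - 1 < n by omega) hyT, ?_, ?_⟩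
    · simp only [affMap]
      have := hρ.pos (n-1) (show n - 1 < n by omega)
      nlinarith
    · have h2 : affMap ρ S.t (n-1) y ≤ affMap ρ S.t (n-1) 1 := by
        simp only [affMap]
        have := hρ.pos (n-1) (show n - 1 < n by omega)
        nlinarith
      rw [h1] at h2
      exact h2

include hα in
/-- slice through the bottom letter `0`, allowing lower endpoint `0` -/
lemma slice_map_bot {j : ℕ} (hQ1 : QQ S α j < 1) :
    S.T ∩ Icc 0 (affMap ρ S.t 0 (QQ S α j)) =
      affMap ρ S.t 0 '' (S.T ∩ Icc 0 (QQ S α j)) := by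
  have h3 := nge3 hρ
  have h0 : affMap ρ S.t 0 0 = 0 := S.left0
  have ht0 := t_zero hρ S
  ext x
  constructor
  · rintro ⟨hxT, hx1, hx2⟩
    obtain ⟨b, hb, y, hy, hxy⟩ := exists_letter hρ S hxT
    have hy01 := T_subset_Icc hρ S hy
    simp only [mem_Icc] at hy01
    have hxv : x = ρ b * y + S.t b := hxy
    have hρb := hρ.pos b hb
    have hρ0 := hρ.pos 0 (show 0 < n by omega)
    simp only [affMap] at hx2
    have hba : b = 0 := by
      by_contra hcon
      have hblt : 0 < b := by omega
      have := t_chain hρ S hblt hb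
      nlinarith
    subst hba
    refine ⟨y, ⟨hy, hy01.1, ?_⟩, hxy.symm⟩
    nlinarith
  · rintro ⟨y, ⟨hyT, hy1, hy2⟩, rfl⟩
    have hρ0 := hρ.pos 0 (show 0 < n by omega)
    refine ⟨map_mem_T hρ S (show 0 < n by omega) hyT, ?_, ?_⟩
    · simp only [affMap]
      nlinarith
    · simp only [affMap]
      nlinarith

include hβ
/-- the right-patch slice identity -/
lemma Rp_slice (m : ℕ) : S.T ∩ Icc (qm S β m) 1 = Rp S β m := by
  have h3 := nge3 hρ
  have hb1 := hβ.1
  have hb2 := hβ.2.1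
  induction m with
  | zero =>
      rw [qm_zero, Rp_eq]
      ext x
      constructor
      · rintro ⟨hxT, hx1, hx2⟩
        obtain ⟨b, hb, y, hy, hxy⟩ := exists_letter hρ S hxT
        have hy01 := T_subset_Icc hρ S hy
        simp only [mem_Icc] at hy01
        have hxv : x = ρ b * y + S.t b := hxy
        have hbge : n - β ≤ b := by
          by_contra hcon
          push_neg at hcon
          have h5 : S.t b + ρ b ≤ S.t (n - β - 1) + ρ (n - β - 1) := by
            rcases Nat.lt_or_ge b (n - β - 1) with hh | hh
            · have := t_chain hρ S hh (by omega)
              have := hρ.pos (n-β-1) (by omega)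
              linarith
            · have : b = n - β - 1 := by omega
              subst this; linarith
          have h6 := gapB hρ S β hβ
          have := hρ.pos b hb
          nlinarith
        refine mem_iUnion₂.2 ⟨b, Finset.mem_Ico.2 ⟨hbge, hb⟩, ?_⟩
        simp only [TouchingIFS.cyl, List.nil_append]
        refine ⟨y, hy, ?_⟩
        rw [affWord_append]
        simp [affWord_cons, affWord_nil, affMap, hxv]
      · intro hx
        rcases mem_iUnion₂.1 hx with ⟨j, hj, hxj⟩
        simp only [Finset.mem_Ico] at hj
        have hgd : Gd n (List.replicate 0 (n-1) ++ [j]) := by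
          intro b hb; simp at hb; omega
        have h1 := cyl_subset_Icc hρ S hgd hxj
        simp only [mem_Icc] at h1
        refine ⟨cyl_subset_T hρ S hgd hxj, ?_, ?_⟩
        · have : affWord ρ S.t (List.replicate 0 (n-1) ++ [j]) 0 = S.t j := by
            simp [affWord_append, affWord_cons, affWord_nil, affMap]
          rw [this] at h1
          have := t_mono hρ S hj.1 hj.2
          linarith [h1.1]
        · have h2 : affWord ρ S.t (List.replicate 0 (n-1) ++ [j]) 1 ≤ 1 :=
            affWord_le_one hρ S hgd le_rfl
          linarith [h1.2]
  | succ m ih =>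
      rw [qm_succ, Rp_succ]
      have hq0 := qm_pos hρ S β hβ m
      have key := slice_map_top hρ S β hβ hq0
      rw [ih] at key
      exact key

omit hβ
include hα
/-- the left-patch slice identity -/
lemma Lp_slice (j : ℕ) : S.T ∩ Icc 0 (QQ S α j) = Lp S α j := by
  have h3 := nge3 hρ
  have ha1 := hα.1
  have ha2 := hα.2.1
  induction j with
  | zero =>
      rw [QQ_zero, Lp_eq]
      ext x
      constructor
      · rintro ⟨hxT, hx1, hx2⟩
        obtain ⟨b, hb, y, hy, hxy⟩ := exists_letter hρ S hxT
        have hy01 := T_subset_Icc hρ S hy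
        simp only [mem_Icc] at hy01
        have hxv : x = ρ b * y + S.t b := hxy
        have hble : b < α := by
          by_contra hcon
          push_neg at hcon
          have h5 : S.t α ≤ S.t b := t_mono hρ S hcon hb
          have h6 := gapA hρ S α hα
          have := hρ.pos b hb
          nlinarith
        refine mem_iUnion₂.2 ⟨b, Finset.mem_range.2 hble, ?_⟩
        simp only [TouchingIFS.cyl, List.nil_append]
        refine ⟨y, hy, ?_⟩
        simp [affWord_cons, affWord_nil, affMap, hxv]
      · intro hx
        rcases mem_iUnion₂.1 hx with ⟨i, hi, hxi⟩
        simp only [Finset.mem_range] at hi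
        have hgd : Gd n (List.replicate 0 0 ++ [i]) := by
          intro b hb; simp at hb; omega
        have h1 := cyl_subset_Icc hρ S hgd hxi
        simp only [mem_Icc] at h1
        refine ⟨cyl_subset_T hρ S hgd hxi, ?_, ?_⟩
        · have h2 : 0 ≤ affWord ρ S.t (List.replicate 0 0 ++ [i]) 0 :=
            affWord_nonneg hρ S hgd le_rfl
          linarith [h1.1]
        · have : affWord ρ S.t (List.replicate 0 0 ++ [i]) 1 = S.t i + ρ i := by
            simp [affWord_append, affWord_cons, affWord_nil, affMap]; ring
          rw [this] at h1
          have h5 : S.t i + ρ i ≤ S.t (α - 1) + ρ (α - 1) := by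
            rcases Nat.lt_or_ge i (α - 1) with hh | hh
            · have := t_chain hρ S hh (by omega)
              have := hρ.pos (α - 1) (by omega)
              linarith
            · have : i = α - 1 := by omega
              subst this; linarith
          linarith [h1.2]
  | succ j ih =>
      rw [QQ_succ, Lp_succ]
      have hQ1 := QQ_lt_one hρ S α hα j
      have key := slice_map_bot hρ S α hα (j := j) hQ1
      rw [ih] at key
      exact key

end main2
end StatementSix
namespace StatementSix
open Set

section main3
set_option linter.unusedSectionVars false
set_option linter.unusedVariables false
set_option maxHeartbeats 1000000
variable {n : ℕ} {ρ : ℕ → ℝ}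
variable (hρ : ContractionVec n ρ) (S : TouchingIFS n ρ) (α β i₀ : ℕ)
  (hα : S.alphaRun α) (hβ : S.betaRun β) (hi₀ : S.touch i₀)
  (hρ1n : ρ (n - 1) ≤ ρ 0) (τ : ℕ → ℕ) (hτ : tauSpec ρ n τ)

/-- lower endpoint of the hull of `C^m` -/
def cinf (m : ℕ) : ℝ := affMap ρ S.t i₀ (qm S β m)
/-- upper endpoint of the hull of `C^m` -/
def csup (m : ℕ) : ℝ := affMap ρ S.t (i₀ + 1) (QQ S α (τ m))

omit hρ in
lemma word_image_cons (a : ℕ) (v : List ℕ) (X : Set ℝ) :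
    affWord ρ S.t (a :: v) '' X = affMap ρ S.t a '' (affWord ρ S.t v '' X) := by
  rw [← image_comp]; rfl

omit hρ in
lemma patchR_cons (a : ℕ) (w : List ℕ) (m : ℕ) :
    S.patchR β (a :: w) m = affMap ρ S.t a '' S.patchR β w m := by
  simp only [TouchingIFS.patchR, image_iUnion₂]
  apply iUnion₂_congr
  intro j hj
  rw [show (a :: w) ++ List.replicate m (n-1) ++ [j] = a :: (w ++ List.replicate m (n-1) ++ [j]) by simp,
    cyl_cons]

omit hρ in
lemma patchL_cons (a : ℕ) (w : List ℕ) (m : ℕ) :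
    S.patchL α (a :: w) m = affMap ρ S.t a '' S.patchL α w m := by
  simp only [TouchingIFS.patchL, image_iUnion₂]
  apply iUnion₂_congr
  intro j hj
  rw [show (a :: w) ++ List.replicate m 0 ++ [j] = a :: (w ++ List.replicate m 0 ++ [j]) by simp,
    cyl_cons]

omit hρ in
lemma C_eq (m : ℕ) :
    Cset S α β i₀ τ m =
      affMap ρ S.t i₀ '' Rp S β m ∪ affMap ρ S.t (i₀ + 1) '' Lp S α (τ m) := by
  rw [Cset, show [i₀] = i₀ :: ([] : List ℕ) by rfl, show [i₀+1] = (i₀+1) :: ([] : List ℕ) by rfl,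
    patchR_cons, patchL_cons]
  rfl

include hρ hβ hi₀

lemma cinf_gt (m : ℕ) : S.t i₀ < cinf S β i₀ m := by
  have h1 := qm_pos hρ S β hβ m
  have h2 := hρ.pos i₀ (by have := i0_lt hρ S i₀ hi₀; omega)
  simp only [cinf, affMap]
  nlinarith

lemma cinf_pos (m : ℕ) : 0 < cinf S β i₀ m := by
  have := cinf_gt hρ S β i₀ hβ hi₀ m
  have := t_nonneg hρ S (show i₀ < n by have := i0_lt hρ S i₀ hi₀; omega)
  linarith

lemma cinf_le_p (m : ℕ) : cinf S β i₀ m ≤ S.t (i₀ + 1) := by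
  have h1 := qm_le_one hρ S β hβ m
  have h2 := hρ.pos i₀ (by have := i0_lt hρ S i₀ hi₀; omega)
  have h3 := ptouch hρ S i₀ hi₀
  simp only [cinf, affMap]
  nlinarith

omit hβ
include hα

lemma p_le_csup (m : ℕ) : S.t (i₀ + 1) ≤ csup S α i₀ τ m := by
  have h1 := QQ_pos hρ S α hα (τ m)
  have h2 := hρ.pos (i₀+1) (i0_lt hρ S i₀ hi₀)
  simp only [csup, affMap]
  nlinarith

lemma csup_lt (m : ℕ) : csup S α i₀ τ m < S.t (i₀ + 1) + ρ (i₀ + 1) := by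
  have h1 := QQ_lt_one hρ S α hα (τ m)
  have h2 := hρ.pos (i₀+1) (i0_lt hρ S i₀ hi₀)
  simp only [csup, affMap]
  nlinarith

lemma csup_lt_one (m : ℕ) : csup S α i₀ τ m < 1 := by
  have h1 := csup_lt hρ S α i₀ hα hi₀ τ m
  have h2 := t_add_le_one hρ S (i0_lt hρ S i₀ hi₀)
  linarith

include hβ

lemma cinf_le_csup (m : ℕ) : cinf S β i₀ m ≤ csup S α i₀ τ m :=
  le_trans (cinf_le_p hρ S β i₀ hβ hi₀ m) (p_le_csup hρ S α i₀ hα hi₀ τ m)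

lemma C_subset_Icc (m : ℕ) :
    Cset S α β i₀ τ m ⊆ Icc (cinf S β i₀ m) (csup S α i₀ τ m) := by
  rw [C_eq]
  have hi := i0_lt hρ S i₀ hi₀
  have hpι := hρ.pos i₀ (by omega)
  have hpι1 := hρ.pos (i₀+1) hi
  have hptc := ptouch hρ S i₀ hi₀
  rintro x (⟨y, hy, rfl⟩ | ⟨y, hy, rfl⟩)
  · have h1 : y ∈ S.T ∩ Icc (qm S β m) 1 := by rw [Rp_slice hρ S β hβ]; exact hy
    obtain ⟨-, hy1, hy2⟩ := h1
    constructor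
    · simp only [cinf, affMap]; nlinarith
    · have : affMap ρ S.t i₀ y ≤ S.t (i₀+1) := by simp only [affMap]; nlinarith
      linarith [p_le_csup hρ S α i₀ hα hi₀ τ m]
  · have h1 : y ∈ S.T ∩ Icc 0 (QQ S α (τ m)) := by rw [Lp_slice hρ S α hα]; exact hy
    obtain ⟨-, hy1, hy2⟩ := h1
    constructor
    · have : S.t (i₀+1) ≤ affMap ρ S.t (i₀+1) y := by simp only [affMap]; nlinarith
      linarith [cinf_le_p hρ S β i₀ hβ hi₀ m]
    · simp only [csup, affMap]; nlinarith

lemma C_subset_T (m : ℕ) : Cset S α β i₀ τ m ⊆ S.T := by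
  rw [C_eq]
  have hi := i0_lt hρ S i₀ hi₀
  rintro x (⟨y, hy, rfl⟩ | ⟨y, hy, rfl⟩)
  · exact map_mem_T hρ S (by omega) (Rp_subset_T hρ S β hβ m hy)
  · exact map_mem_T hρ S hi (Lp_subset_T hρ S α hα (τ m) hy)

lemma C_slice (m : ℕ) :
    S.T ∩ Icc (cinf S β i₀ m) (csup S α i₀ τ m) = Cset S α β i₀ τ m := by
  have hi := i0_lt hρ S i₀ hi₀
  have hpι := hρ.pos i₀ (by omega)
  have hpι1 := hρ.pos (i₀+1) hi
  have hptc := ptouch hρ S i₀ hi₀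
  apply Subset.antisymm
  · intro x hx
    obtain ⟨hxT, hx1, hx2⟩ := hx
    obtain ⟨b, hb, y, hy, hxy⟩ := exists_letter hρ S hxT
    have hy01 := T_subset_Icc hρ S hy
    simp only [mem_Icc] at hy01
    have hxv : x = ρ b * y + S.t b := hxy
    have hρb := hρ.pos b hb
    rcases Nat.lt_trichotomy b i₀ with hlt | heq | hgt
    · exfalso
      have := t_chain hρ S hlt (by omega)
      have := cinf_gt hρ S β i₀ hβ hi₀ m
      nlinarith
    · subst heq
      have hyq : qm S β m ≤ y := by
        simp only [cinf, affMap] at hx1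
        nlinarith
      have : y ∈ Rp S β m := by
        rw [← Rp_slice hρ S β hβ]
        exact ⟨hy, hyq, hy01.2⟩
      rw [C_eq]
      exact Or.inl ⟨y, this, hxy.symm⟩
    · rcases Nat.lt_or_ge b (i₀ + 2) with hb2 | hb2
      · have heq : b = i₀ + 1 := by omega
        subst heq
        have hyQ : y ≤ QQ S α (τ m) := by
          simp only [csup, affMap] at hx2
          nlinarith
        have : y ∈ Lp S α (τ m) := by
          rw [← Lp_slice hρ S α hα]
          exact ⟨hy, hy01.1, hyQ⟩
        rw [C_eq]
        exact Or.inr ⟨y, this, hxy.symm⟩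
      · exfalso
        have h5 : S.t (i₀+1) + ρ (i₀+1) ≤ S.t b := t_chain hρ S (by omega) hb
        have := csup_lt hρ S α i₀ hα hi₀ τ m
        nlinarith
  · intro x hx
    exact ⟨C_subset_T hρ S α β i₀ hα hβ hi₀ τ m hx,
      C_subset_Icc hρ S α β i₀ hα hβ hi₀ τ m hx⟩

lemma C_word_slice {w : List ℕ} (hw : Gd n w) (m : ℕ) :
    S.T ∩ Icc (affWord ρ S.t w (cinf S β i₀ m)) (affWord ρ S.t w (csup S α i₀ τ m)) =
      affWord ρ S.t w '' Cset S α β i₀ τ m := by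
  rw [slice_word hρ S hw (cinf_pos hρ S β i₀ hβ hi₀ m) (csup_lt_one hρ S α i₀ hα hi₀ τ m),
    C_slice hρ S α β i₀ hα hβ hi₀ τ m]

lemma Cw_subset_Icc {w : List ℕ} (hw : Gd n w) (m : ℕ) :
    affWord ρ S.t w '' Cset S α β i₀ τ m ⊆
      Icc (affWord ρ S.t w (cinf S β i₀ m)) (affWord ρ S.t w (csup S α i₀ τ m)) := by
  rintro x ⟨y, hy, rfl⟩
  have h := C_subset_Icc hρ S α β i₀ hα hβ hi₀ τ m hy
  exact ⟨affWord_mono hρ hw h.1, affWord_mono hρ hw h.2⟩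

lemma Cw_subset_T {w : List ℕ} (hw : Gd n w) (m : ℕ) :
    affWord ρ S.t w '' Cset S α β i₀ τ m ⊆ S.T := by
  rintro x ⟨y, hy, rfl⟩
  exact word_mem_T hρ S hw (C_subset_T hρ S α β i₀ hα hβ hi₀ τ m hy)

lemma Cw_pos {w : List ℕ} (hw : Gd n w) {m : ℕ} {x : ℝ}
    (hx : x ∈ affWord ρ S.t w '' Cset S α β i₀ τ m) : 0 < x ∧ x < 1 := by
  obtain ⟨y, hy, rfl⟩ := hx
  have h := C_subset_Icc hρ S α β i₀ hα hβ hi₀ τ m hy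
  constructor
  · exact affWord_pos hρ S hw (lt_of_lt_of_le (cinf_pos hρ S β i₀ hβ hi₀ m) h.1)
  · exact affWord_lt_one hρ S hw (lt_of_le_of_lt h.2 (csup_lt_one hρ S α i₀ hα hi₀ τ m))

/-- a point in a shifted copy lies strictly inside the hull of letter `a` -/
lemma in_strip {a : ℕ} (ha : a < n) {u : List ℕ} (hu : Gd n u) {m : ℕ} {x : ℝ}
    (hx : x ∈ affMap ρ S.t a '' (affWord ρ S.t u '' Cset S α β i₀ τ m)) :
    S.t a < x ∧ x < S.t a + ρ a := by
  obtain ⟨y, hy, rfl⟩ := hx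
  obtain ⟨h1, h2⟩ := Cw_pos hρ S α β i₀ hα hβ hi₀ τ hu hy
  have := hρ.pos a ha
  simp only [affMap]
  constructor <;> nlinarith

omit hα hβ hi₀ hτ
lemma affMap_injOn {a : ℕ} (ha : a < n) {x y : ℝ}
    (h : affMap ρ S.t a x = affMap ρ S.t a y) : x = y := by
  have := hρ.pos a ha
  simp only [affMap] at h
  nlinarith [h]

lemma strip_common {a : ℕ} (ha : a < n) {A B : Set ℝ} {x : ℝ}
    (hA : x ∈ affMap ρ S.t a '' A) (hB : x ∈ affMap ρ S.t a '' B) :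
    ∃ y, y ∈ A ∩ B ∧ x = affMap ρ S.t a y := by
  obtain ⟨y, hy, rfl⟩ := hA
  obtain ⟨z, hz, he⟩ := hB
  have hzy : z = y := affMap_injOn hρ S ha he
  subst hzy
  exact ⟨z, ⟨hy, hz⟩, rfl⟩

-- τ monotonicity
include hρ1n hτ
lemma tau_succ_gt {k : ℕ} (hk : 1 ≤ k) : τ k < τ (k + 1) := by
  have h3 := nge3 hρ
  obtain ⟨h1, h2, h3'⟩ := hτ k hk
  obtain ⟨g1, g2, g3⟩ := hτ (k+1) (by omega)
  have hρ0 := hρ.pos 0 (by omega)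
  have hρn := hρ.pos (n-1) (by omega)
  have hρ01 := hρ.lt_one 0 (by omega)
  by_contra hcon
  push_neg at hcon
  have hle : ρ 0 ^ τ k ≤ ρ 0 ^ τ (k+1) :=
    pow_le_pow_of_le_one (le_of_lt hρ0) (le_of_lt hρ01) hcon
  have hchain : ρ 0 ^ τ (k+1) ≤ ρ (n-1) ^ k * ρ 0 := by
    calc ρ 0 ^ τ (k+1) ≤ ρ (n-1) ^ (k+1) := g3
    _ = ρ (n-1) ^ k * ρ (n-1) := by ring
    _ ≤ ρ (n-1) ^ k * ρ 0 := by
        apply mul_le_mul_of_nonneg_left hρ1n (le_of_lt (pow_pos hρn k))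
  linarith

lemma tau_add_le (k s : ℕ) (hk : 1 ≤ k) : τ k + s ≤ τ (k + s) := by
  induction s with
  | zero => simp
  | succ s ih =>
      have h9 := tau_succ_gt hρ hρ1n τ hτ (show 1 ≤ k + s by omega)
      have he : k + (s+1) = k + s + 1 := by omega
      rw [he]
      omega

lemma tau_mono {m r : ℕ} (hm : 1 ≤ m) (hmr : m ≤ r) : τ m ≤ τ r := by
  have h1 := tau_add_le hρ hρ1n τ hτ m (r - m) hm
  have h2 : m + (r - m) = r := by omega
  rw [h2] at h1
  omega
omit hρ1n hτ

-- nesting of patches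
include hβ
lemma qm_mono_succ (m : ℕ) : qm S β m ≤ qm S β (m + 1) := by
  have h3 := nge3 hρ
  rw [qm_succ]
  have h1 := qm_le_one hρ S β hβ m
  have h2 := hρ.pos (n-1) (by omega)
  have h4 := t_top hρ S
  have h5 := hρ.lt_one (n-1) (by omega)
  simp only [affMap]
  nlinarith [mul_nonneg (by linarith : (0:ℝ) ≤ 1 - ρ (n-1)) (by linarith : (0:ℝ) ≤ 1 - qm S β m)]

lemma qm_mono {m r : ℕ} (h : m ≤ r) : qm S β m ≤ qm S β r := by
  induction r with
  | zero => simp_all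
  | succ r ih =>
      rcases Nat.lt_or_ge m (r+1) with hh | hh
      · exact le_trans (ih (by omega)) (qm_mono_succ hρ S β hβ r)
      · have : m = r + 1 := by omega
        subst this; rfl

lemma Rp_mono {m r : ℕ} (h : m ≤ r) : Rp S β r ⊆ Rp S β m := by
  rw [← Rp_slice hρ S β hβ, ← Rp_slice hρ S β hβ]
  intro x hx
  exact ⟨hx.1, le_trans (qm_mono hρ S β hβ h) hx.2.1, hx.2.2⟩
omit hβ

include hα
lemma QQ_anti_succ (j : ℕ) : QQ S α (j + 1) ≤ QQ S α j := by
  have h3 := nge3 hρ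
  rw [QQ_succ]
  have h1 := QQ_pos hρ S α hα j
  have h2 := hρ.pos 0 (by omega)
  have h2' := hρ.lt_one 0 (by omega)
  have h4 := t_zero hρ S
  simp only [affMap]
  nlinarith

lemma QQ_anti {m r : ℕ} (h : m ≤ r) : QQ S α r ≤ QQ S α m := by
  induction r with
  | zero => simp_all
  | succ r ih =>
      rcases Nat.lt_or_ge m (r+1) with hh | hh
      · exact le_trans (QQ_anti_succ hρ S α hα r) (ih (by omega))
      · have : m = r + 1 := by omega
        subst this; rfl

lemma Lp_mono {m r : ℕ} (h : m ≤ r) : Lp S α r ⊆ Lp S α m := by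
  rw [← Lp_slice hρ S α hα, ← Lp_slice hρ S α hα]
  intro x hx
  exact ⟨hx.1, hx.2.1, le_trans hx.2.2 (QQ_anti hρ S α hα h)⟩

include hβ hρ1n hτ
lemma C_mono {m r : ℕ} (hm : 1 ≤ m) (hmr : m ≤ r) :
    Cset S α β i₀ τ r ⊆ Cset S α β i₀ τ m := by
  rw [C_eq, C_eq]
  apply union_subset_union
  · exact image_mono (Rp_mono hρ S β hβ hmr)
  · exact image_mono (Lp_mono hρ S α hα (tau_mono hρ hρ1n τ hτ hm hmr))

end main3
end StatementSix
namespace StatementSix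
open Set

section main4
set_option linter.unusedSectionVars false
set_option linter.unusedVariables false
set_option maxHeartbeats 1000000
variable {n : ℕ} {ρ : ℕ → ℝ}
variable (hρ : ContractionVec n ρ) (S : TouchingIFS n ρ) (α β i₀ : ℕ)
  (hα : S.alphaRun α) (hβ : S.betaRun β) (hi₀ : S.touch i₀)
  (hρ1n : ρ (n - 1) ≤ ρ 0) (τ : ℕ → ℕ) (hτ : tauSpec ρ n τ)

omit hρ in
lemma word_image_nil (X : Set ℝ) : affWord ρ S.t [] '' X = X := by
  have : affWord ρ S.t [] = id := rfl
  rw [this, image_id]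

omit hρ in
lemma cyl_single (b : ℕ) : S.cyl [b] = affMap ρ S.t b '' S.T := by
  rw [show [b] = b :: ([] : List ℕ) from rfl, cyl_cons]
  simp only [TouchingIFS.cyl]
  rw [word_image_nil S S.T]

include hρ hα hβ hi₀ hρ1n hτ

lemma R_KEY : ∀ m (u : List ℕ) (r : ℕ), Gd n u → 1 ≤ r →
    (Rp S β m ∩ (affWord ρ S.t u '' Cset S α β i₀ τ r)).Nonempty →
    (affWord ρ S.t u '' Cset S α β i₀ τ r) ⊆ Rp S β m ∧ m + 1 ≤ u.length + r := by
  have h3 := nge3 hρ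
  have hb1 := hβ.1
  have hb2 := hβ.2.1
  have hi := i0_lt hρ S i₀ hi₀
  intro m
  induction m with
  | zero =>
      rintro u r hu hr ⟨x, hx1, hx2⟩
      have hxq : S.t (n - β) ≤ x ∧ x ≤ 1 := by
        have := (Rp_slice hρ S β hβ 0).symm ▸ hx1
        rw [qm_zero] at this
        exact ⟨this.2.1, this.2.2⟩
      cases u with
      | nil =>
          rw [word_image_nil] at hx2 ⊢
          have hxc := C_subset_Icc hρ S α β i₀ hα hβ hi₀ τ r hx2
          have hni : n - β ≤ i₀ := by
            by_contra hcon
            push_neg at hcon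
            have hne := i0_ne_beta hρ S β i₀ hβ hi₀
            have hlt : i₀ + 1 < n - β := by omega
            have h5 : S.t (i₀+1) + ρ (i₀+1) ≤ S.t (n - β) := t_chain hρ S hlt (by omega)
            have h6 := csup_lt hρ S α i₀ hα hi₀ τ r
            have := hxc.2
            linarith [hxq.1]
          constructor
          · intro z hz
            rw [← Rp_slice hρ S β hβ, qm_zero]
            refine ⟨C_subset_T hρ S α β i₀ hα hβ hi₀ τ r hz, ?_, ?_⟩
            · have h7 := (C_subset_Icc hρ S α β i₀ hα hβ hi₀ τ r hz).1
              have h8 := cinf_gt hρ S β i₀ hβ hi₀ r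
              have h9 : S.t (n-β) ≤ S.t i₀ := t_mono hρ S hni (by omega)
              linarith
            · exact (T_subset_Icc hρ S (C_subset_T hρ S α β i₀ hα hβ hi₀ τ r hz)).2
          · omega
      | cons b u' =>
          have hu' : Gd n u' := fun c hc => hu c (by simp [hc])
          have hbn : b < n := hu b (by simp)
          rw [word_image_cons] at hx2
          have hst := in_strip hρ S α β i₀ hα hβ hi₀ τ hbn hu' hx2
          have hbge : n - β ≤ b := by
            by_contra hcon
            push_neg at hcon
            have h5 : S.t b + ρ b ≤ S.t (n-β-1) + ρ (n-β-1) := by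
              rcases Nat.lt_or_ge b (n-β-1) with hh | hh
              · have := t_chain hρ S hh (by omega)
                have := hρ.pos (n-β-1) (by omega)
                linarith
              · have : b = n-β-1 := by omega
                subst this; linarith
            have h6 := gapB hρ S β hβ
            linarith [hxq.1, hst.2]
          constructor
          · intro z hz
            rw [word_image_cons] at hz
            have : z ∈ affMap ρ S.t b '' S.T := by
              obtain ⟨y, hy, rfl⟩ := hz
              exact ⟨y, Cw_subset_T hρ S α β i₀ hα hβ hi₀ τ hu' r hy, rfl⟩
            rw [Rp_eq]
            refine mem_iUnion₂.2 ⟨b, Finset.mem_Ico.2 ⟨hbge, hbn⟩, ?_⟩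
            rw [show List.replicate 0 (n-1) ++ [b] = [b] by simp, cyl_single]
            exact this
          · simp; omega
  | succ m ih =>
      rintro u r hu hr ⟨x, hx1, hx2⟩
      have hxq : qm S β (m+1) ≤ x ∧ x ≤ 1 := by
        have := (Rp_slice hρ S β hβ (m+1)).symm ▸ hx1
        exact ⟨this.2.1, this.2.2⟩
      have hqgt : S.t (n-1) < qm S β (m+1) := qm_gt hρ S β hβ (m+1) (by omega)
      cases u with
      | nil =>
          exfalso
          rw [word_image_nil] at hx2
          have hxc := (C_subset_Icc hρ S α β i₀ hα hβ hi₀ τ r hx2).2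
          have hlt : csup S α i₀ τ r < qm S β (m+1) := by
            rcases Nat.lt_or_ge (i₀+1) (n-1) with hh | hh
            · have h5 : S.t (i₀+1) + ρ (i₀+1) ≤ S.t (n-1) := t_chain hρ S hh (by omega)
              have h6 := csup_lt hρ S α i₀ hα hi₀ τ r
              linarith
            · have heq : i₀ + 1 = n - 1 := by omega
              obtain ⟨ht1, -, -⟩ := hτ r hr
              obtain ⟨j, hj⟩ : ∃ j, τ r = j + 1 := ⟨τ r - 1, by omega⟩
              have hQlt : QQ S α (τ r) < ρ 0 := by rw [hj]; exact QQ_succ_lt hρ S α hα j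
              have hqge := qm_ge hρ S β hβ m
              have hlt2 : QQ S α (τ r) < qm S β m := lt_of_lt_of_le hQlt hqge
              rw [qm_succ]
              simp only [csup, heq, affMap]
              have := hρ.pos (n-1) (by omega)
              nlinarith
          linarith [hxq.1]
      | cons b u' =>
          have hu' : Gd n u' := fun c hc => hu c (by simp [hc])
          have hbn : b < n := hu b (by simp)
          rw [word_image_cons] at hx2
          have hst := in_strip hρ S α β i₀ hα hβ hi₀ τ hbn hu' hx2
          have hbe : b = n - 1 := by
            by_contra hcon
            have hblt : b < n - 1 := by omega
            have := t_chain hρ S hblt (by omega)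
            linarith [hxq.1, hst.2]
          subst hbe
          rw [Rp_succ] at hx1
          obtain ⟨y, ⟨hy1, hy2⟩, hxy⟩ := strip_common hρ S (show n-1 < n by omega) hx1 hx2
          obtain ⟨hsub, hlev⟩ := ih u' r hu' hr ⟨y, hy1, hy2⟩
          constructor
          · intro z hz
            rw [word_image_cons] at hz
            rw [Rp_succ]
            obtain ⟨y', hy', rfl⟩ := hz
            exact ⟨y', hsub hy', rfl⟩
          · simp; omega

lemma L_KEY : ∀ j (u : List ℕ) (r : ℕ), Gd n u → 1 ≤ r →
    (Lp S α j ∩ (affWord ρ S.t u '' Cset S α β i₀ τ r)).Nonempty →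
    (affWord ρ S.t u '' Cset S α β i₀ τ r) ⊆ Lp S α j ∧ j ≤ u.length + τ r := by
  have h3 := nge3 hρ
  have ha1 := hα.1
  have ha2 := hα.2.1
  have hi := i0_lt hρ S i₀ hi₀
  have ht0 := t_zero hρ S
  have ht1 := t1_ge hρ S
  intro j
  induction j with
  | zero =>
      rintro u r hu hr ⟨x, hx1, hx2⟩
      have hxq : 0 ≤ x ∧ x ≤ QQ S α 0 := by
        have := (Lp_slice hρ S α hα 0).symm ▸ hx1
        exact ⟨this.2.1, this.2.2⟩
      have hQlt : QQ S α 0 < S.t α := QQ_zero_lt hρ S α hα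
      cases u with
      | nil =>
          rw [word_image_nil] at hx2 ⊢
          have hxc := C_subset_Icc hρ S α β i₀ hα hβ hi₀ τ r hx2
          have hia : i₀ + 1 < α := by
            by_contra hcon
            push_neg at hcon
            have hne := alpha_ne_i0 hρ S α i₀ hα hi₀
            have hle : α ≤ i₀ := by omega
            have h5 : S.t α ≤ S.t i₀ := t_mono hρ S hle (by omega)
            have h6 := cinf_gt hρ S β i₀ hβ hi₀ r
            linarith [hxc.1, hxq.2]
          constructor
          · intro z hz
            rw [← Lp_slice hρ S α hα]
            refine ⟨C_subset_T hρ S α β i₀ hα hβ hi₀ τ r hz, ?_, ?_⟩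
            · exact (T_subset_Icc hρ S (C_subset_T hρ S α β i₀ hα hβ hi₀ τ r hz)).1
            · have h7 := (C_subset_Icc hρ S α β i₀ hα hβ hi₀ τ r hz).2
              have h8 := csup_lt hρ S α i₀ hα hi₀ τ r
              have h9 : S.t (i₀+1) + ρ (i₀+1) ≤ S.t (α-1) + ρ (α-1) := by
                rcases Nat.lt_or_ge (i₀+1) (α-1) with hh | hh
                · have := t_chain hρ S hh (by omega)
                  have := hρ.pos (α-1) (by omega)
                  linarith
                · have : i₀ + 1 = α - 1 := by omega
                  rw [this]
              rw [QQ_zero]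
              linarith
          · omega
      | cons b u' =>
          have hu' : Gd n u' := fun c hc => hu c (by simp [hc])
          have hbn : b < n := hu b (by simp)
          rw [word_image_cons] at hx2
          have hst := in_strip hρ S α β i₀ hα hβ hi₀ τ hbn hu' hx2
          have hblt : b < α := by
            by_contra hcon
            push_neg at hcon
            have h5 : S.t α ≤ S.t b := t_mono hρ S hcon hbn
            linarith [hxq.2, hst.1]
          constructor
          · intro z hz
            rw [word_image_cons] at hz
            have : z ∈ affMap ρ S.t b '' S.T := by
              obtain ⟨y, hy, rfl⟩ := hz
              exact ⟨y, Cw_subset_T hρ S α β i₀ hα hβ hi₀ τ hu' r hy, rfl⟩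
            rw [Lp_eq]
            refine mem_iUnion₂.2 ⟨b, Finset.mem_range.2 hblt, ?_⟩
            rw [show List.replicate 0 0 ++ [b] = [b] by simp, cyl_single]
            exact this
          · omega
  | succ j ih =>
      rintro u r hu hr ⟨x, hx1, hx2⟩
      have hxq : 0 ≤ x ∧ x ≤ QQ S α (j+1) := by
        have := (Lp_slice hρ S α hα (j+1)).symm ▸ hx1
        exact ⟨this.2.1, this.2.2⟩
      have hQlt : QQ S α (j+1) < ρ 0 := QQ_succ_lt hρ S α hα j
      cases u with
      | nil =>
          exfalso
          rw [word_image_nil] at hx2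
          have hxc := (C_subset_Icc hρ S α β i₀ hα hβ hi₀ τ r hx2).1
          rcases Nat.eq_zero_or_pos i₀ with hi0 | hi0
          · have hcv : cinf S β i₀ r = ρ 0 * qm S β r := by
              simp only [cinf, hi0, affMap, ht0]
              ring
            have hq := qm_gt hρ S β hβ r hr
            have hQj : QQ S α j < S.t (n-1) := QQ_lt_t hρ S α hα j (by omega) (by omega)
            have hρ0 := hρ.pos 0 (by omega)
            have : QQ S α (j+1) < cinf S β i₀ r := by
              rw [QQ_succ, hcv]
              simp only [affMap, ht0]
              nlinarith
            linarith [hxq.2]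
          · have h5 : S.t 1 ≤ S.t i₀ := t_mono hρ S (by omega) (by omega)
            have h6 := cinf_gt hρ S β i₀ hβ hi₀ r
            linarith [hxq.2]
      | cons b u' =>
          have hu' : Gd n u' := fun c hc => hu c (by simp [hc])
          have hbn : b < n := hu b (by simp)
          rw [word_image_cons] at hx2
          have hst := in_strip hρ S α β i₀ hα hβ hi₀ τ hbn hu' hx2
          have hbe : b = 0 := by
            by_contra hcon
            have h5 : S.t 1 ≤ S.t b := t_mono hρ S (by omega) hbn
            linarith [hxq.2, hst.1]
          subst hbe
          rw [Lp_succ] at hx1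
          obtain ⟨y, ⟨hy1, hy2⟩, hxy⟩ := strip_common hρ S (show 0 < n by omega) hx1 hx2
          obtain ⟨hsub, hlev⟩ := ih u' r hu' hr ⟨y, hy1, hy2⟩
          constructor
          · intro z hz
            rw [word_image_cons] at hz
            rw [Lp_succ]
            obtain ⟨y', hy', rfl⟩ := hz
            exact ⟨y', hsub hy', rfl⟩
          · simp; omega

lemma KEY : ∀ (v : List ℕ) (m r : ℕ), Gd n v → v ≠ [] → 1 ≤ m → 1 ≤ r →
    (Cset S α β i₀ τ m ∩ (affWord ρ S.t v '' Cset S α β i₀ τ r)).Nonempty →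
    (affWord ρ S.t v '' Cset S α β i₀ τ r) ⊆ Cset S α β i₀ τ m ∧ m + 1 ≤ v.length + r := by
  have h3 := nge3 hρ
  have hi := i0_lt hρ S i₀ hi₀
  rintro v m r hv hvne hm hr ⟨x, hx1, hx2⟩
  cases v with
  | nil => exact absurd rfl hvne
  | cons a v' =>
      have hv' : Gd n v' := fun c hc => hv c (by simp [hc])
      have han : a < n := hv a (by simp)
      rw [word_image_cons] at hx2
      have hst := in_strip hρ S α β i₀ hα hβ hi₀ τ han hv' hx2
      rw [C_eq] at hx1
      rcases hx1 with hxr | hxl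
      · -- x in the shifted right patch, forcing a = i₀
        have hb : S.t i₀ ≤ x ∧ x ≤ S.t i₀ + ρ i₀ := by
          obtain ⟨y, hy, rfl⟩ := hxr
          have hyT := Rp_subset_T hρ S β hβ m hy
          have hy01 := T_subset_Icc hρ S hyT
          simp only [mem_Icc] at hy01
          have := hρ.pos i₀ (by omega)
          simp only [affMap]
          constructor <;> nlinarith
        have ha : a = i₀ := by
          rcases Nat.lt_trichotomy a i₀ with hh | hh | hh
          · exfalso
            have := t_chain hρ S hh (by omega)
            linarith [hst.2, hb.1]
          · exact hh
          · exfalso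
            have := t_chain hρ S hh (by omega)
            linarith [hst.1, hb.2]
        rw [ha] at hx2 ⊢
        obtain ⟨y, ⟨hy1, hy2⟩, hxy⟩ := strip_common hρ S (show i₀ < n by omega) hxr hx2
        obtain ⟨hsub, hlev⟩ := R_KEY hρ S α β i₀ hα hβ hi₀ hρ1n τ hτ m v' r hv' hr ⟨y, hy1, hy2⟩
        constructor
        · intro z hz
          rw [word_image_cons] at hz
          rw [C_eq]
          left
          obtain ⟨y', hy', rfl⟩ := hz
          exact ⟨y', hsub hy', rfl⟩
        · simp; omega
      · -- x in the shifted left patch, forcing a = i₀ + 1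
        have hb : S.t (i₀+1) ≤ x ∧ x ≤ S.t (i₀+1) + ρ (i₀+1) := by
          obtain ⟨y, hy, rfl⟩ := hxl
          have hyT := Lp_subset_T hρ S α hα (τ m) hy
          have hy01 := T_subset_Icc hρ S hyT
          simp only [mem_Icc] at hy01
          have := hρ.pos (i₀+1) (by omega)
          simp only [affMap]
          constructor <;> nlinarith
        have ha : a = i₀ + 1 := by
          rcases Nat.lt_trichotomy a (i₀+1) with hh | hh | hh
          · exfalso
            have := t_chain hρ S hh (by omega)
            linarith [hst.2, hb.1]
          · exact hh
          · exfalso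
            have := t_chain hρ S hh (by omega)
            linarith [hst.1, hb.2]
        rw [ha] at hx2 ⊢
        obtain ⟨y, ⟨hy1, hy2⟩, hxy⟩ := strip_common hρ S (show i₀ + 1 < n by omega) hxl hx2
        obtain ⟨hsub, hlev⟩ := L_KEY hρ S α β i₀ hα hβ hi₀ hρ1n τ hτ (τ m) v' r hv' hr ⟨y, hy1, hy2⟩
        constructor
        · intro z hz
          rw [word_image_cons] at hz
          rw [C_eq]
          right
          obtain ⟨y', hy', rfl⟩ := hz
          exact ⟨y', hsub hy', rfl⟩
        · -- level arithmetic via τ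
          by_contra hcon
          push_neg at hcon
          have hge : v'.length + r + 1 ≤ m := by simp at hcon ⊢; omega
          have h7 := tau_add_le hρ hρ1n τ hτ r (v'.length + 1) hr
          have h8 := tau_mono hρ hρ1n τ hτ (show 1 ≤ r + (v'.length + 1) by omega)
            (show r + (v'.length + 1) ≤ m by omega)
          omega

lemma ML : ∀ (w : List ℕ) (m : ℕ) (v : List ℕ) (r : ℕ), Gd n w → Gd n v → 1 ≤ m → 1 ≤ r →
    w.length + m ≤ v.length + r →
    ((affWord ρ S.t w '' Cset S α β i₀ τ m) ∩ (affWord ρ S.t v '' Cset S α β i₀ τ r)).Nonempty →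
    affWord ρ S.t v '' Cset S α β i₀ τ r ⊆ affWord ρ S.t w '' Cset S α β i₀ τ m := by
  intro w
  induction w with
  | nil =>
      intro m v r hw hv hm hr hlev hne
      rw [word_image_nil] at *
      cases v with
      | nil =>
          rw [word_image_nil] at *
          exact C_mono hρ S α β i₀ hα hβ hρ1n τ hτ hm (by simpa using hlev)
      | cons b v' =>
          exact (KEY hρ S α β i₀ hα hβ hi₀ hρ1n τ hτ (b::v') m r hv (by simp) hm hr hne).1
  | cons a w' ih =>
      intro m v r hw hv hm hr hlev hne
      cases v with
      | nil =>
          exfalso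
          rw [word_image_nil] at hne
          have hne' : (Cset S α β i₀ τ r ∩ (affWord ρ S.t (a::w') '' Cset S α β i₀ τ m)).Nonempty := by
            rw [inter_comm] at hne
            exact hne
          have := (KEY hρ S α β i₀ hα hβ hi₀ hρ1n τ hτ (a::w') r m hw (by simp) hr hm hne').2
          simp at hlev this
          omega
      | cons b v' =>
          have hw' : Gd n w' := fun c hc => hw c (by simp [hc])
          have hv' : Gd n v' := fun c hc => hv c (by simp [hc])
          have han : a < n := hw a (by simp)
          have hbn : b < n := hv b (by simp)
          obtain ⟨x, hx1, hx2⟩ := hne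
          rw [word_image_cons] at hx1 hx2
          have hsa := in_strip hρ S α β i₀ hα hβ hi₀ τ han hw' hx1
          have hsb := in_strip hρ S α β i₀ hα hβ hi₀ τ hbn hv' hx2
          have hab : a = b := by
            rcases Nat.lt_trichotomy a b with hh | hh | hh
            · exfalso
              have := t_chain hρ S hh hbn
              linarith [hsa.2, hsb.1]
            · exact hh
            · exfalso
              have := t_chain hρ S hh han
              linarith [hsa.1, hsb.2]
          subst hab
          obtain ⟨y, ⟨hy1, hy2⟩, hxy⟩ := strip_common hρ S han hx1 hx2
          have hsub := ih m v' r hw' hv' hm hr (by simp at hlev ⊢; omega) ⟨y, hy1, hy2⟩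
          intro z hz
          rw [word_image_cons] at hz ⊢
          obtain ⟨y', hy', rfl⟩ := hz
          exact ⟨y', hsub hy', rfl⟩

end main4
end StatementSix
namespace StatementSix
open Set

section main5
set_option linter.unusedSectionVars false
set_option linter.unusedVariables false
set_option maxHeartbeats 1000000
variable {n : ℕ} {ρ : ℕ → ℝ}
variable (hρ : ContractionVec n ρ) (S : TouchingIFS n ρ) (α β i₀ : ℕ)
  (hα : S.alphaRun α) (hβ : S.betaRun β) (hi₀ : S.touch i₀)
  (hρ1n : ρ (n - 1) ≤ ρ 0) (τ : ℕ → ℕ) (hτ : tauSpec ρ n τ)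

include hρ

lemma exists_R : ∃ R : ℝ, 0 < R ∧ R < 1 ∧ ∀ i, i < n → ρ i ≤ R := by
  have h3 := nge3 hρ
  have hne : ((Finset.range n).image ρ).Nonempty :=
    ⟨ρ 0, Finset.mem_image_of_mem ρ (Finset.mem_range.mpr (show 0 < n by omega))⟩
  refine ⟨((Finset.range n).image ρ).max' hne, ?_, ?_, ?_⟩
  · have h := Finset.le_max' ((Finset.range n).image ρ) (ρ 0) (Finset.mem_image_of_mem ρ (Finset.mem_range.mpr (show 0 < n by omega)))
    have := hρ.pos 0 (by omega)
    linarith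
  · obtain ⟨j, hj, hje⟩ := Finset.mem_image.1 (Finset.max'_mem _ hne)
    rw [← hje]
    exact hρ.lt_one j (by simpa using hj)
  · intro i hi
    exact Finset.le_max' ((Finset.range n).image ρ) (ρ i) (Finset.mem_image_of_mem ρ (Finset.mem_range.mpr hi))

lemma exists_rmin : ∃ c : ℝ, 0 < c ∧ c ≤ 1 ∧ ∀ i, i < n → c ≤ ρ i := by
  have h3 := nge3 hρ
  have hne : ((Finset.range n).image ρ).Nonempty :=
    ⟨ρ 0, Finset.mem_image_of_mem ρ (Finset.mem_range.mpr (show 0 < n by omega))⟩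
  refine ⟨((Finset.range n).image ρ).min' hne, ?_, ?_, ?_⟩
  · obtain ⟨j, hj, hje⟩ := Finset.mem_image.1 (Finset.min'_mem _ hne)
    rw [← hje]
    exact hρ.pos j (by simpa using hj)
  · obtain ⟨j, hj, hje⟩ := Finset.mem_image.1 (Finset.min'_mem _ hne)
    rw [← hje]
    exact le_of_lt (hρ.lt_one j (by simpa using hj))
  · intro i hi
    exact Finset.min'_le ((Finset.range n).image ρ) (ρ i) (Finset.mem_image_of_mem ρ (Finset.mem_range.mpr hi))

variable {R c : ℝ} (hR0 : 0 < R) (hR1 : R < 1) (hR : ∀ i, i < n → ρ i ≤ R)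
  (hc0 : 0 < c) (hc1 : c ≤ 1) (hc : ∀ i, i < n → c ≤ ρ i)

include hR in
lemma wrate_le_pow {w : List ℕ} (hw : Gd n w) : wrate ρ w ≤ R ^ w.length := by
  induction w with
  | nil => simp [wrate]
  | cons a w ih =>
      rw [wrate_cons]
      have h1 := ih (fun b hb => hw b (by simp [hb]))
      have h2 := hR a (hw a (by simp))
      have h3 := hρ.pos a (hw a (by simp))
      have h4 := wrate_pos hρ (fun b hb => hw b (by simp [hb]) : Gd n w)
      simp only [List.length_cons, pow_succ]
      calc ρ a * wrate ρ w ≤ R * wrate ρ w := by nlinarith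
      _ ≤ R * R ^ w.length := by nlinarith [le_of_lt (lt_of_lt_of_le h3 h2)]
      _ = R ^ w.length * R := by ring

lemma affWord_repl_top_one (m : ℕ) : affWord ρ S.t (List.replicate m (n-1)) 1 = 1 := by
  induction m with
  | zero => rfl
  | succ m ih => rw [List.replicate_succ, affWord_cons, ih]; exact S.right1

lemma affWord_repl_bot_zero (j : ℕ) : affWord ρ S.t (List.replicate j 0) 0 = 0 := by
  induction j with
  | zero => rfl
  | succ j ih => rw [List.replicate_succ, affWord_cons, ih]; exact S.left0

include hβ hR in
lemma one_sub_qm (m : ℕ) : 1 - qm S β m ≤ R ^ m := by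
  have h3 := nge3 hρ
  have h1 : (1:ℝ) - qm S β m = wrate ρ (List.replicate m (n-1)) * (1 - S.t (n-β)) := by
    have := affWord_sub (ρ := ρ) S.t (List.replicate m (n-1)) 1 (S.t (n-β))
    rw [affWord_repl_top_one hρ S] at this
    exact this
  have h2 : wrate ρ (List.replicate m (n-1)) ≤ R ^ m := by
    have h2' := wrate_le_pow hρ hR (gd_replicate hρ (show n-1 < n by omega) (m := m))
    rwa [List.length_replicate] at h2'
  have h4 := wrate_pos hρ (gd_replicate hρ (show n-1 < n by omega) (m := m))
  have h5 := t_nonneg hρ S (show n - β < n by have := hβ.1; omega)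
  have h6 : S.t (n - β) ≤ 1 := by
    have := t_add_le_one hρ S (show n - β < n by have := hβ.1; omega)
    have := hρ.pos (n-β) (show n - β < n by have := hβ.1; omega)
    linarith
  rw [h1]
  nlinarith

include hα hR in
lemma QQ_le_pow (j : ℕ) : QQ S α j ≤ R ^ j := by
  have h3 := nge3 hρ
  have ha2 := hα.2.1
  have h1 : QQ S α j = wrate ρ (List.replicate j 0) * (S.t (α-1) + ρ (α-1)) := by
    have := affWord_sub (ρ := ρ) S.t (List.replicate j 0) (S.t (α-1) + ρ (α-1)) 0
    rw [affWord_repl_bot_zero hρ S] at this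
    simpa [QQ] using this
  have h2 : wrate ρ (List.replicate j 0) ≤ R ^ j := by
    have h2' := wrate_le_pow hρ hR (gd_replicate hρ (show 0 < n by omega) (m := j))
    rwa [List.length_replicate] at h2'
  have h4 := wrate_pos hρ (gd_replicate hρ (show 0 < n by omega) (m := j))
  have h5 := t_nonneg hρ S (show α - 1 < n by omega)
  have h6 := t_add_le_one hρ S (show α - 1 < n by omega)
  have h7 := hρ.pos (α-1) (show α - 1 < n by omega)
  rw [h1]
  nlinarith

include hρ1n hτ in
lemma tau_ge {m : ℕ} (hm : 1 ≤ m) : m ≤ τ m := by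
  have h1 := (hτ 1 le_rfl).1
  have h2 := tau_add_le hρ hρ1n τ hτ 1 (m - 1) le_rfl
  have h3 : 1 + (m - 1) = m := by omega
  rw [h3] at h2
  omega

include hα hβ hi₀ hρ1n hτ hR0 hR1 hR in
lemma width_C {m : ℕ} (hm : 1 ≤ m) :
    csup S α i₀ τ m - cinf S β i₀ m ≤ 2 * R ^ (m + 1) := by
  have h3 := nge3 hρ
  have hi := i0_lt hρ S i₀ hi₀
  have hp := ptouch hρ S i₀ hi₀
  have h1 : csup S α i₀ τ m - S.t (i₀+1) = ρ (i₀+1) * QQ S α (τ m) := by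
    simp only [csup, affMap]; ring
  have h2 : S.t (i₀+1) - cinf S β i₀ m = ρ i₀ * (1 - qm S β m) := by
    simp only [cinf, affMap]
    rw [← hp]
    ring
  have h4 := QQ_le_pow hρ S α hα hR (τ m)
  have h5 : QQ S α (τ m) ≤ R ^ m := by
    refine le_trans h4 (pow_le_pow_of_le_one (le_of_lt hR0) (le_of_lt hR1) ?_)
    exact tau_ge hρ hρ1n τ hτ hm
  have h6 := one_sub_qm hρ S β hβ hR m
  have h7 := hR (i₀+1) hi
  have h8 := hR i₀ (by omega)
  have h9 := hρ.pos (i₀+1) hi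
  have h10 := hρ.pos i₀ (by omega)
  have h11 := QQ_pos hρ S α hα (τ m)
  have h12 : 0 ≤ 1 - qm S β m := by
    have := qm_le_one hρ S β hβ m
    linarith
  have h13 : 0 < R ^ m := pow_pos hR0 m
  have : csup S α i₀ τ m - cinf S β i₀ m ≤ R * R ^ m + R * R ^ m := by nlinarith
  calc csup S α i₀ τ m - cinf S β i₀ m ≤ R * R ^ m + R * R ^ m := this
  _ = 2 * R ^ (m+1) := by ring

include hα hβ hi₀ hρ1n hτ hR0 hR1 hR in
lemma width_D {w : List ℕ} (hw : Gd n w) {m k : ℕ} (hm : 1 ≤ m) (hk : k ≤ w.length + m) :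
    affWord ρ S.t w (csup S α i₀ τ m) - affWord ρ S.t w (cinf S β i₀ m) ≤ 2 * R ^ (k + 1) := by
  have h1 := affWord_sub (ρ := ρ) S.t w (csup S α i₀ τ m) (cinf S β i₀ m)
  have h2 := wrate_le_pow hρ hR hw
  have h3 := wrate_pos hρ hw
  have h4 := width_C hρ S α β i₀ hα hβ hi₀ hρ1n τ hτ hR0 hR1 hR hm
  have h5 : 0 ≤ csup S α i₀ τ m - cinf S β i₀ m := by
    have := cinf_le_csup hρ S α β i₀ hα hβ hi₀ τ m
    linarith
  have h6 : 0 < R ^ (m+1) := pow_pos hR0 _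
  have h7 : 0 < R ^ w.length := pow_pos hR0 _
  have key : affWord ρ S.t w (csup S α i₀ τ m) - affWord ρ S.t w (cinf S β i₀ m)
      ≤ R ^ w.length * (2 * R ^ (m+1)) := by
    rw [h1]
    nlinarith
  have h8 : R ^ w.length * (2 * R ^ (m+1)) = 2 * R ^ (w.length + m + 1) := by
    rw [pow_add, pow_add]
    ring
  have h9 : R ^ (w.length + m + 1) ≤ R ^ (k+1) :=
    pow_le_pow_of_le_one (le_of_lt hR0) (le_of_lt hR1) (by omega)
  linarith

-- membership of hull endpoints in T and in the designated set
include hβ in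
lemma qm_mem_T (m : ℕ) : qm S β m ∈ S.T := by
  have h3 := nge3 hρ
  have hb1 := hβ.1
  apply word_mem_T hρ S (gd_replicate hρ (show n-1<n by omega))
  have : S.t (n - β) = affMap ρ S.t (n-β) 0 := by simp [affMap]
  rw [this]
  exact map_mem_T hρ S (by omega) (zero_mem_T hρ S)

include hβ hi₀ in
lemma cinf_mem_T (m : ℕ) : cinf S β i₀ m ∈ S.T :=
  map_mem_T hρ S (by have := i0_lt hρ S i₀ hi₀; omega) (qm_mem_T hρ S β hβ m)

include hβ in
lemma cinf_mem_C (m : ℕ) : cinf S β i₀ m ∈ Cset S α β i₀ τ m := by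
  rw [C_eq]
  left
  refine ⟨qm S β m, ?_, rfl⟩
  rw [← Rp_slice hρ S β hβ]
  exact ⟨qm_mem_T hρ S β hβ m, le_rfl, qm_le_one hρ S β hβ m⟩

include hα in
lemma QQ_mem_T (j : ℕ) : QQ S α j ∈ S.T := by
  have h3 := nge3 hρ
  have ha2 := hα.2.1
  apply word_mem_T hρ S (gd_replicate hρ (show 0<n by omega))
  have : S.t (α-1) + ρ (α-1) = affMap ρ S.t (α-1) 1 := by simp [affMap]; ring
  rw [this]
  exact map_mem_T hρ S (by omega) (one_mem_T hρ S)

include hα hi₀ in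
lemma csup_mem_T (m : ℕ) : csup S α i₀ τ m ∈ S.T :=
  map_mem_T hρ S (i0_lt hρ S i₀ hi₀) (QQ_mem_T hρ S α hα (τ m))

include hα in
lemma csup_mem_C (m : ℕ) : csup S α i₀ τ m ∈ Cset S α β i₀ τ m := by
  rw [C_eq]
  right
  refine ⟨QQ S α (τ m), ?_, rfl⟩
  rw [← Lp_slice hρ S α hα]
  refine ⟨QQ_mem_T hρ S α hα (τ m), le_of_lt (QQ_pos hρ S α hα (τ m)), le_rfl⟩

end main5
end StatementSix
namespace StatementSix
open Set

section main6
set_option linter.unusedSectionVars false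
set_option linter.unusedVariables false
set_option maxHeartbeats 1000000
variable {n : ℕ} {ρ : ℕ → ℝ}
variable (hρ : ContractionVec n ρ) (S : TouchingIFS n ρ) (α β i₀ : ℕ)
  (hα : S.alphaRun α) (hβ : S.betaRun β) (hi₀ : S.touch i₀)
  (hρ1n : ρ (n - 1) ≤ ρ 0) (τ : ℕ → ℕ) (hτ : tauSpec ρ n τ)
variable {R c : ℝ} (hR0 : 0 < R) (hR1 : R < 1) (hR : ∀ i, i < n → ρ i ≤ R)
  (hc0 : 0 < c) (hc : ∀ i, i < n → c ≤ ρ i)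

include hρ hR0 hR1 hR hc0 hc in
lemma descend_aux : ∀ N : ℕ, ∀ x ∈ S.T, ∀ cc : ℝ, 0 < cc → cc ≤ 1 → R ^ N < cc →
    ∃ w : List ℕ, Gd n w ∧ (∃ y ∈ S.T, x = affWord ρ S.t w y) ∧
      wrate ρ w < cc ∧ c * cc ≤ wrate ρ w := by
  intro N
  induction N with
  | zero =>
      intro x hx cc h1 h2 h3
      exfalso
      simp only [pow_zero] at h3
      linarith
  | succ N ih =>
      intro x hx cc h1 h2 h3
      obtain ⟨a, ha, y, hy, hxy⟩ := exists_letter hρ S hx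
      have hρa := hρ.pos a ha
      have hca := hc a ha
      have hRa := hR a ha
      by_cases hlt : ρ a < cc
      · refine ⟨[a], ?_, ⟨y, hy, by rw [hxy]; rfl⟩, ?_, ?_⟩
        · intro b hb; simp at hb; omega
        · have : wrate ρ [a] = ρ a := by simp [wrate]
          rw [this]; exact hlt
        · have : wrate ρ [a] = ρ a := by simp [wrate]
          rw [this]
          nlinarith
      · push_neg at hlt
        have hcc1 : 0 < cc / ρ a := by positivity
        have hcc2 : cc / ρ a ≤ 1 := by
          rw [div_le_one hρa]; exact hlt
        have hcc3 : R ^ N < cc / ρ a := by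
          rw [lt_div_iff₀ hρa]
          have h5 : R ^ N * ρ a ≤ R ^ N * R :=
            mul_le_mul_of_nonneg_left hRa (le_of_lt (pow_pos hR0 N))
          calc R ^ N * ρ a ≤ R ^ N * R := h5
          _ = R ^ (N+1) := by ring
          _ < cc := h3
        obtain ⟨w', hw', ⟨y', hy', hy'e⟩, hu, hl⟩ := ih y hy (cc / ρ a) hcc1 hcc2 hcc3
        refine ⟨a :: w', ?_, ⟨y', hy', ?_⟩, ?_, ?_⟩
        · intro b hb
          rcases List.mem_cons.1 hb with h | h
          · omega
          · exact hw' b h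
        · rw [hxy, hy'e, affWord_cons]
        · rw [wrate_cons]
          calc ρ a * wrate ρ w' < ρ a * (cc / ρ a) := by nlinarith
          _ = cc := by field_simp
        · rw [wrate_cons]
          have : c * (cc / ρ a) ≤ wrate ρ w' := hl
          calc c * cc = ρ a * (c * (cc / ρ a)) := by field_simp
          _ ≤ ρ a * wrate ρ w' := by nlinarith

/-- the reference gap of `T` (just after letter `α-1`) -/
def g0L (S : TouchingIFS n ρ) (α : ℕ) : ℝ := S.t (α - 1) + ρ (α - 1)
def g0R (S : TouchingIFS n ρ) (α : ℕ) : ℝ := S.t α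

include hρ hα in
lemma g0_facts : 0 < g0L S α ∧ g0R S α < 1 ∧ g0L S α < g0R S α ∧
    g0L S α ∈ S.T ∧ g0R S α ∈ S.T ∧ S.T ∩ Ioo (g0L S α) (g0R S α) = ∅ := by
  have h3 := nge3 hρ
  have ha1 := hα.1
  have ha2 := hα.2.1
  have hg := gapA hρ S α hα
  have ht1 := t_nonneg hρ S (show α - 1 < n by omega)
  have ht2 := hρ.pos (α-1) (show α - 1 < n by omega)
  have ht3 := t_add_le_one hρ S (show α < n by omega)
  have ht4 := hρ.pos α (show α < n by omega)
  refine ⟨by simp only [g0L]; linarith, by simp only [g0R]; linarith,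
    by simp only [g0L, g0R]; linarith, ?_, ?_, ?_⟩
  · have : g0L S α = affMap ρ S.t (α-1) 1 := by simp [g0L, affMap]; ring
    rw [this]
    exact map_mem_T hρ S (by omega) (one_mem_T hρ S)
  · have : g0R S α = affMap ρ S.t α 0 := by simp [g0R, affMap]
    rw [this]
    exact map_mem_T hρ S (by omega) (zero_mem_T hρ S)
  · have := gap1 hρ S (show (α - 1) + 1 < n by omega)
    have he : α - 1 + 1 = α := by omega
    rw [he] at this
    exact this

include hρ hα hβ hi₀ hρ1n hτ hR0 hR1 hR hc0 hc in
/-- existence of an admissible cut in any window of suitable size -/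
lemma fine_cut (k : ℕ) {ε : ℝ} (hε2 : ε ≤ 1) (hε3 : 6 * R ^ k ≤ ε)
    (hε4 : 6 * R ^ k ≤ c * (g0R S α - g0L S α) * ε) (u : ℝ) :
    ∃ z, z ∈ Ioo u (u + ε) ∧ z ∉ S.T ∧
      ∀ (w : List ℕ) (m : ℕ), Gd n w → 1 ≤ m → k ≤ w.length + m →
        z ∉ Icc (affWord ρ S.t w (cinf S β i₀ m)) (affWord ρ S.t w (csup S α i₀ τ m)) := by
  obtain ⟨hg1, hg2, hg3, hg4, hg5, hg6⟩ := g0_facts hρ S α hα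
  have hRk : (0:ℝ) < R ^ k := pow_pos hR0 k
  have hRk1 : R ^ (k+1) < R ^ k := by
    have : R ^ (k+1) = R ^ k * R := by ring
    nlinarith
  have hε0 : 0 < ε := by linarith
  by_cases hmid : ∃ x₀, x₀ ∈ S.T ∧ x₀ ∈ Ioo (u + ε/3) (u + 2*ε/3)
  · obtain ⟨x₀, hx₀T, hx₀m⟩ := hmid
    simp only [mem_Ioo] at hx₀m
    obtain ⟨N, hN⟩ := exists_pow_lt_of_lt_one (show (0:ℝ) < ε/3 by linarith) hR1
    obtain ⟨w, hw, ⟨y, hyT, hxw⟩, hwu, hwl⟩ :=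
      descend_aux hρ S hR0 hR1 hR hc0 hc N x₀ hx₀T (ε/3) (by linarith) (by linarith) hN
    have hy01 := T_subset_Icc hρ S hyT
    simp only [mem_Icc] at hy01
    have hwp := wrate_pos hρ hw
    -- hull of the cylinder of w contains x₀ and has width wrate w < ε/3
    have hhull1 : affWord ρ S.t w 0 ≤ x₀ := hxw ▸ affWord_mono hρ hw hy01.1
    have hhull2 : x₀ ≤ affWord ρ S.t w 1 := hxw ▸ affWord_mono hρ hw hy01.2
    have hwidth : affWord ρ S.t w 1 - affWord ρ S.t w 0 = wrate ρ w := by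
      have := affWord_sub (ρ := ρ) S.t w 1 0
      simpa using this
    have hin1 : u < affWord ρ S.t w 0 := by linarith
    have hin2 : affWord ρ S.t w 1 < u + ε := by linarith
    set g1 := affWord ρ S.t w (g0L S α) with hg1d
    set g2 := affWord ρ S.t w (g0R S α) with hg2d
    have hg12 : g2 - g1 = wrate ρ w * (g0R S α - g0L S α) := affWord_sub S.t w _ _
    have hgin1 : affWord ρ S.t w 0 ≤ g1 := affWord_mono hρ hw (le_of_lt hg1)
    have hgin2 : g2 ≤ affWord ρ S.t w 1 := affWord_mono hρ hw (le_of_lt hg2)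
    have hglt : g1 < g2 := affWord_strictMono hρ hw hg3
    have hgapT : S.T ∩ Ioo g1 g2 = ∅ := gap_word hρ S hw hg1 hg2 (le_of_lt hg3) hg6
    have hglen : 2 * R ^ k ≤ g2 - g1 := by
      rw [hg12]
      have h5 : c * (ε/3) * (g0R S α - g0L S α) ≤ wrate ρ w * (g0R S α - g0L S α) := by
        nlinarith
      nlinarith
    refine ⟨(g1 + g2)/2, ⟨by linarith, by linarith⟩, ?_, ?_⟩
    · intro hmem
      have : (g1+g2)/2 ∈ S.T ∩ Ioo g1 g2 := ⟨hmem, by constructor <;> linarith⟩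
      rw [hgapT] at this
      exact this
    · intro w' m hw' hm hk hmem
      simp only [mem_Icc] at hmem
      set A := affWord ρ S.t w' (cinf S β i₀ m) with hA
      set B := affWord ρ S.t w' (csup S α i₀ τ m) with hB
      have hAT : A ∈ S.T := word_mem_T hρ S hw' (cinf_mem_T hρ S β i₀ hβ hi₀ m)
      have hBT : B ∈ S.T := word_mem_T hρ S hw' (csup_mem_T hρ S α i₀ hα hi₀ (τ := τ) m)
      have hA1 : A ≤ g1 := by
        by_contra hcon
        push_neg at hcon
        have : A ∈ S.T ∩ Ioo g1 g2 := ⟨hAT, hcon, by linarith⟩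
        rw [hgapT] at this
        exact this
      have hB1 : g2 ≤ B := by
        by_contra hcon
        push_neg at hcon
        have : B ∈ S.T ∩ Ioo g1 g2 := ⟨hBT, by linarith, hcon⟩
        rw [hgapT] at this
        exact this
      have hwd := width_D hρ S α β i₀ hα hβ hi₀ hρ1n τ hτ hR0 hR1 hR hw' hm hk
      rw [← hA, ← hB] at hwd
      linarith
  · push_neg at hmid
    refine ⟨u + ε/2, ⟨by linarith, by linarith⟩, ?_, ?_⟩
    · intro hmem
      exact absurd (⟨by linarith, by linarith⟩ : u + ε/2 ∈ Ioo (u + ε/3) (u + 2*ε/3))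
        (hmid _ hmem)
    · intro w' m hw' hm hk hmem
      simp only [mem_Icc] at hmem
      set A := affWord ρ S.t w' (cinf S β i₀ m) with hA
      set B := affWord ρ S.t w' (csup S α i₀ τ m) with hB
      have hAT : A ∈ S.T := word_mem_T hρ S hw' (cinf_mem_T hρ S β i₀ hβ hi₀ m)
      have hBT : B ∈ S.T := word_mem_T hρ S hw' (csup_mem_T hρ S α i₀ hα hi₀ (τ := τ) m)
      have hA1 : A ≤ u + ε/3 := by
        by_contra hcon
        push_neg at hcon
        exact absurd (⟨hcon, by linarith⟩ : A ∈ Ioo (u + ε/3) (u + 2*ε/3)) (hmid A hAT)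
      have hB1 : u + 2*ε/3 ≤ B := by
        by_contra hcon
        push_neg at hcon
        exact absurd (⟨by linarith, hcon⟩ : B ∈ Ioo (u + ε/3) (u + 2*ε/3)) (hmid B hBT)
      have hwd := width_D hρ S α β i₀ hα hβ hi₀ hρ1n τ hτ hR0 hR1 hR hw' hm hk
      rw [← hA, ← hB] at hwd
      linarith

-- protectors
def aL (S : TouchingIFS n ρ) (β i₀ : ℕ) (w : List ℕ) (m : ℕ) : ℝ :=
  affWord ρ S.t w (cinf S β i₀ m)
def aR (S : TouchingIFS n ρ) (α i₀ : ℕ) (τ : ℕ → ℕ) (w : List ℕ) (m : ℕ) : ℝ :=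
  affWord ρ S.t w (csup S α i₀ τ m)
def bL (S : TouchingIFS n ρ) (β i₀ : ℕ) (w : List ℕ) (m : ℕ) : ℝ :=
  affWord ρ S.t (w ++ i₀ :: List.replicate m (n-1)) (S.t (n-β-1) + ρ (n-β-1))
def bR (S : TouchingIFS n ρ) (α i₀ : ℕ) (τ : ℕ → ℕ) (w : List ℕ) (m : ℕ) : ℝ :=
  affWord ρ S.t (w ++ (i₀+1) :: List.replicate (τ m) 0) (S.t α)
def pL (S : TouchingIFS n ρ) (β i₀ : ℕ) (w : List ℕ) (m : ℕ) : ℝ :=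
  (bL S β i₀ w m + aL S β i₀ w m)/2
def pR (S : TouchingIFS n ρ) (α i₀ : ℕ) (τ : ℕ → ℕ) (w : List ℕ) (m : ℕ) : ℝ :=
  (aR S α i₀ τ w m + bR S α i₀ τ w m)/2

lemma aL_eq (w : List ℕ) (m : ℕ) :
    aL S β i₀ w m = affWord ρ S.t (w ++ i₀ :: List.replicate m (n-1)) (S.t (n-β)) := by
  rw [aL, affWord_append, affWord_cons]
  rfl

lemma aR_eq (w : List ℕ) (m : ℕ) :
    aR S α i₀ τ w m =
      affWord ρ S.t (w ++ (i₀+1) :: List.replicate (τ m) 0) (S.t (α-1) + ρ (α-1)) := by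
  rw [aR, affWord_append, affWord_cons]
  rfl

include hρ hi₀ in
lemma gdL {w : List ℕ} (hw : Gd n w) (m : ℕ) : Gd n (w ++ i₀ :: List.replicate m (n-1)) := by
  have h3 := nge3 hρ
  have hi := i0_lt hρ S i₀ hi₀
  intro b hb
  rcases List.mem_append.1 hb with h | h
  · exact hw b h
  · rcases List.mem_cons.1 h with h' | h'
    · omega
    · have := List.eq_of_mem_replicate h'
      omega

include hρ hi₀ in
lemma gdR {w : List ℕ} (hw : Gd n w) (m : ℕ) :
    Gd n (w ++ (i₀+1) :: List.replicate (τ m) 0) := by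
  have h3 := nge3 hρ
  have hi := i0_lt hρ S i₀ hi₀
  intro b hb
  rcases List.mem_append.1 hb with h | h
  · exact hw b h
  · rcases List.mem_cons.1 h with h' | h'
    · omega
    · have := List.eq_of_mem_replicate h'
      omega

include hρ hβ hi₀ in
lemma bL_lt_aL {w : List ℕ} (hw : Gd n w) (m : ℕ) : bL S β i₀ w m < aL S β i₀ w m := by
  rw [aL_eq, bL]
  exact affWord_strictMono hρ (gdL hρ S i₀ hi₀ hw m) (gapB hρ S β hβ)

include hρ hα hi₀ in
lemma aR_lt_bR {w : List ℕ} (hw : Gd n w) (m : ℕ) : aR S α i₀ τ w m < bR S α i₀ τ w m := by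
  rw [aR_eq, bR]
  exact affWord_strictMono hρ (gdR hρ S i₀ hi₀ τ hw m) (gapA hρ S α hα)

include hρ hβ hi₀ in
lemma bL_mem_T {w : List ℕ} (hw : Gd n w) (m : ℕ) : bL S β i₀ w m ∈ S.T := by
  have h3 := nge3 hρ
  have hb1 := hβ.1
  have hb2 := hβ.2.1
  rw [bL]
  apply word_mem_T hρ S (gdL hρ S i₀ hi₀ hw m)
  have : S.t (n-β-1) + ρ (n-β-1) = affMap ρ S.t (n-β-1) 1 := by simp [affMap]; ring
  rw [this]
  exact map_mem_T hρ S (by omega) (one_mem_T hρ S)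

include hρ hα hi₀ in
lemma bR_mem_T {w : List ℕ} (hw : Gd n w) (m : ℕ) : bR S α i₀ τ w m ∈ S.T := by
  have h3 := nge3 hρ
  have ha2 := hα.2.1
  rw [bR]
  apply word_mem_T hρ S (gdR hρ S i₀ hi₀ τ hw m)
  have : S.t α = affMap ρ S.t α 0 := by simp [affMap]
  rw [this]
  exact map_mem_T hρ S (by omega) (zero_mem_T hρ S)

include hρ hβ hi₀ in
lemma gapL {w : List ℕ} (hw : Gd n w) (m : ℕ) :
    S.T ∩ Ioo (bL S β i₀ w m) (aL S β i₀ w m) = ∅ := by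
  have h3 := nge3 hρ
  have hb1 := hβ.1
  have hb2 := hβ.2.1
  rw [aL_eq, bL]
  apply gap_word hρ S (gdL hρ S i₀ hi₀ hw m)
  · have := t_nonneg hρ S (show n-β-1 < n by omega)
    have := hρ.pos (n-β-1) (show n-β-1 < n by omega)
    linarith
  · have := t_add_le_one hρ S (show n-β < n by omega)
    have := hρ.pos (n-β) (show n-β < n by omega)
    linarith
  · exact le_of_lt (gapB hρ S β hβ)
  · have := gap1 hρ S (show (n-β-1) + 1 < n by omega)
    have he : n-β-1 + 1 = n-β := by omega
    rw [he] at this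
    exact this

include hρ hα hi₀ in
lemma gapR {w : List ℕ} (hw : Gd n w) (m : ℕ) :
    S.T ∩ Ioo (aR S α i₀ τ w m) (bR S α i₀ τ w m) = ∅ := by
  have h3 := nge3 hρ
  have ha1 := hα.1
  have ha2 := hα.2.1
  rw [aR_eq, bR]
  apply gap_word hρ S (gdR hρ S i₀ hi₀ τ hw m)
  · have := t_nonneg hρ S (show α-1 < n by omega)
    have := hρ.pos (α-1) (show α-1 < n by omega)
    linarith
  · have := t_add_le_one hρ S (show α < n by omega)
    have := hρ.pos α (show α < n by omega)
    linarith
  · exact le_of_lt (gapA hρ S α hα)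
  · have := gap1 hρ S (show (α - 1) + 1 < n by omega)
    have he : α - 1 + 1 = α := by omega
    rw [he] at this
    exact this

include hρ hβ hi₀ in
lemma pL_lt {w : List ℕ} (hw : Gd n w) (m : ℕ) :
    bL S β i₀ w m < pL S β i₀ w m ∧ pL S β i₀ w m < aL S β i₀ w m := by
  have hba := bL_lt_aL hρ S β i₀ hβ hi₀ hw m
  constructor <;> (rw [pL]; linarith)

include hρ hα hi₀ in
lemma pR_lt {w : List ℕ} (hw : Gd n w) (m : ℕ) :
    aR S α i₀ τ w m < pR S α i₀ τ w m ∧ pR S α i₀ τ w m < bR S α i₀ τ w m := by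
  have hba := aR_lt_bR hρ S α i₀ hα hi₀ τ hw m
  constructor <;> (rw [pR]; linarith)

include hρ hβ hi₀ in
lemma pL_not_T {w : List ℕ} (hw : Gd n w) (m : ℕ) : pL S β i₀ w m ∉ S.T := by
  intro h
  have hp := pL_lt hρ S β i₀ hβ hi₀ hw m
  have : pL S β i₀ w m ∈ S.T ∩ Ioo (bL S β i₀ w m) (aL S β i₀ w m) := ⟨h, hp.1, hp.2⟩
  rw [gapL hρ S β i₀ hβ hi₀ hw m] at this
  exact this

include hρ hα hi₀ in
lemma pR_not_T {w : List ℕ} (hw : Gd n w) (m : ℕ) : pR S α i₀ τ w m ∉ S.T := by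
  intro h
  have hp := pR_lt hρ S α i₀ hα hi₀ τ hw m
  have : pR S α i₀ τ w m ∈ S.T ∩ Ioo (aR S α i₀ τ w m) (bR S α i₀ τ w m) := ⟨h, hp.1, hp.2⟩
  rw [gapR hρ S α i₀ hα hi₀ τ hw m] at this
  exact this

include hρ hα hβ hi₀ hρ1n hτ in
lemma pL_avoid {w v : List ℕ} (hw : Gd n w) (hv : Gd n v) {m r : ℕ} (hm : 1 ≤ m) (hr : 1 ≤ r)
    (hlev : w.length + m ≤ v.length + r) :
    pL S β i₀ w m ∉ Icc (affWord ρ S.t v (cinf S β i₀ r)) (affWord ρ S.t v (csup S α i₀ τ r)) := by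
  intro hmem
  simp only [mem_Icc] at hmem
  set A := affWord ρ S.t v (cinf S β i₀ r) with hA
  set B := affWord ρ S.t v (csup S α i₀ τ r) with hB
  have hAT : A ∈ S.T := word_mem_T hρ S hv (cinf_mem_T hρ S β i₀ hβ hi₀ r)
  have hBT : B ∈ S.T := word_mem_T hρ S hv (csup_mem_T hρ S α i₀ hα hi₀ (τ := τ) r)
  have hba := bL_lt_aL hρ S β i₀ hβ hi₀ hw m
  have hp := pL_lt hρ S β i₀ hβ hi₀ hw m
  have hgap := gapL hρ S β i₀ hβ hi₀ hw m
  have hA1 : A ≤ bL S β i₀ w m := by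
    by_contra hcon
    push_neg at hcon
    have : A ∈ S.T ∩ Ioo (bL S β i₀ w m) (aL S β i₀ w m) :=
      ⟨hAT, hcon, by linarith [hmem.1, hp.1, hp.2]⟩
    rw [hgap] at this
    exact this
  have hB1 : aL S β i₀ w m ≤ B := by
    by_contra hcon
    push_neg at hcon
    have : B ∈ S.T ∩ Ioo (bL S β i₀ w m) (aL S β i₀ w m) :=
      ⟨hBT, by linarith [hmem.2, hp.1, hp.2], hcon⟩
    rw [hgap] at this
    exact this
  have hslice := C_word_slice hρ S α β i₀ hα hβ hi₀ τ hv r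
  have hbLD : bL S β i₀ w m ∈ affWord ρ S.t v '' Cset S α β i₀ τ r := by
    rw [← hslice]
    exact ⟨bL_mem_T hρ S β i₀ hβ hi₀ hw m, hA1, by linarith⟩
  have haLD : aL S β i₀ w m ∈ affWord ρ S.t v '' Cset S α β i₀ τ r := by
    rw [← hslice]
    exact ⟨by rw [aL]; exact word_mem_T hρ S hw (cinf_mem_T hρ S β i₀ hβ hi₀ m),
      by linarith, hB1⟩
  have hne : ((affWord ρ S.t w '' Cset S α β i₀ τ m) ∩
      (affWord ρ S.t v '' Cset S α β i₀ τ r)).Nonempty := by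
    refine ⟨aL S β i₀ w m, ⟨cinf S β i₀ m, cinf_mem_C hρ S α β i₀ hβ τ m, ?_⟩, haLD⟩
    rw [aL]
  have hsub := ML hρ S α β i₀ hα hβ hi₀ hρ1n τ hτ w m v r hw hv hm hr hlev hne
  have hbin := Cw_subset_Icc hρ S α β i₀ hα hβ hi₀ τ hw m (hsub hbLD)
  have : aL S β i₀ w m ≤ bL S β i₀ w m := hbin.1
  linarith

include hρ hα hβ hi₀ hρ1n hτ in
lemma pR_avoid {w v : List ℕ} (hw : Gd n w) (hv : Gd n v) {m r : ℕ} (hm : 1 ≤ m) (hr : 1 ≤ r)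
    (hlev : w.length + m ≤ v.length + r) :
    pR S α i₀ τ w m ∉ Icc (affWord ρ S.t v (cinf S β i₀ r)) (affWord ρ S.t v (csup S α i₀ τ r)) := by
  intro hmem
  simp only [mem_Icc] at hmem
  set A := affWord ρ S.t v (cinf S β i₀ r) with hA
  set B := affWord ρ S.t v (csup S α i₀ τ r) with hB
  have hAT : A ∈ S.T := word_mem_T hρ S hv (cinf_mem_T hρ S β i₀ hβ hi₀ r)
  have hBT : B ∈ S.T := word_mem_T hρ S hv (csup_mem_T hρ S α i₀ hα hi₀ (τ := τ) r)
  have hba := aR_lt_bR hρ S α i₀ hα hi₀ τ hw m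
  have hp := pR_lt hρ S α i₀ hα hi₀ τ hw m
  have hgap := gapR hρ S α i₀ hα hi₀ τ hw m
  have hB1 : bR S α i₀ τ w m ≤ B := by
    by_contra hcon
    push_neg at hcon
    have : B ∈ S.T ∩ Ioo (aR S α i₀ τ w m) (bR S α i₀ τ w m) :=
      ⟨hBT, by linarith [hmem.2, hp.1, hp.2], hcon⟩
    rw [hgap] at this
    exact this
  have hA1 : A ≤ aR S α i₀ τ w m := by
    by_contra hcon
    push_neg at hcon
    have : A ∈ S.T ∩ Ioo (aR S α i₀ τ w m) (bR S α i₀ τ w m) :=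
      ⟨hAT, hcon, by linarith [hmem.1, hp.1, hp.2]⟩
    rw [hgap] at this
    exact this
  have hslice := C_word_slice hρ S α β i₀ hα hβ hi₀ τ hv r
  have hbRD : bR S α i₀ τ w m ∈ affWord ρ S.t v '' Cset S α β i₀ τ r := by
    rw [← hslice]
    exact ⟨bR_mem_T hρ S α i₀ hα hi₀ τ hw m, by linarith, hB1⟩
  have haRD : aR S α i₀ τ w m ∈ affWord ρ S.t v '' Cset S α β i₀ τ r := by
    rw [← hslice]
    exact ⟨by rw [aR]; exact word_mem_T hρ S hw (csup_mem_T hρ S α i₀ hα hi₀ (τ := τ) m),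
      hA1, by linarith⟩
  have hne : ((affWord ρ S.t w '' Cset S α β i₀ τ m) ∩
      (affWord ρ S.t v '' Cset S α β i₀ τ r)).Nonempty := by
    refine ⟨aR S α i₀ τ w m, ⟨csup S α i₀ τ m, csup_mem_C hρ S α β i₀ hα τ m, ?_⟩, haRD⟩
    rw [aR]
  have hsub := ML hρ S α β i₀ hα hβ hi₀ hρ1n τ hτ w m v r hw hv hm hr hlev hne
  have hbin := Cw_subset_Icc hρ S α β i₀ hα hβ hi₀ τ hw m (hsub hbRD)
  have : bR S α i₀ τ w m ≤ aR S α i₀ τ w m := hbin.2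
  linarith

include hρ hα hβ hi₀ hτ in
lemma protector_slice {w : List ℕ} (hw : Gd n w) (m : ℕ) :
    S.T ∩ Icc (pL S β i₀ w m) (pR S α i₀ τ w m) = affWord ρ S.t w '' Cset S α β i₀ τ m := by
  have hpLl := pL_lt hρ S β i₀ hβ hi₀ hw m
  have hpRl := pR_lt hρ S α i₀ hα hi₀ τ hw m
  have hgapl := gapL hρ S β i₀ hβ hi₀ hw m
  have hgapr := gapR hρ S α i₀ hα hi₀ τ hw m
  have haa : aL S β i₀ w m ≤ aR S α i₀ τ w m := by
    rw [aL, aR]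
    exact affWord_mono hρ hw (cinf_le_csup hρ S α β i₀ hα hβ hi₀ τ m)
  ext x
  constructor
  · rintro ⟨hxT, hx1, hx2⟩
    have hxa : aL S β i₀ w m ≤ x := by
      by_contra hcon
      push_neg at hcon
      have : x ∈ S.T ∩ Ioo (bL S β i₀ w m) (aL S β i₀ w m) :=
        ⟨hxT, by linarith [hpLl.1], hcon⟩
      rw [hgapl] at this
      exact this
    have hxb : x ≤ aR S α i₀ τ w m := by
      by_contra hcon
      push_neg at hcon
      have : x ∈ S.T ∩ Ioo (aR S α i₀ τ w m) (bR S α i₀ τ w m) :=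
        ⟨hxT, hcon, by linarith [hpRl.2]⟩
      rw [hgapr] at this
      exact this
    rw [← C_word_slice hρ S α β i₀ hα hβ hi₀ τ hw m]
    exact ⟨hxT, hxa, hxb⟩
  · intro hx
    have h1 : x ∈ S.T ∩ Icc (aL S β i₀ w m) (aR S α i₀ τ w m) := by
      rw [aL, aR, C_word_slice hρ S α β i₀ hα hβ hi₀ τ hw m]
      exact hx
    exact ⟨h1.1, by linarith [h1.2.1, hpLl.2], by linarith [h1.2.2, hpRl.1]⟩

end main6
end StatementSix
namespace StatementSix
open Set

/-- all words of a given length over the alphabet `{0,…,n-1}` -/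
def wordsF (n : ℕ) : ℕ → Finset (List ℕ)
  | 0 => {[]}
  | L+1 => ((Finset.range n) ×ˢ (wordsF n L)).image (fun p => p.1 :: p.2)

lemma mem_wordsF {n L : ℕ} {w : List ℕ} : w ∈ wordsF n L ↔ (Gd n w ∧ w.length = L) := by
  induction L generalizing w with
  | zero =>
      simp only [wordsF, Finset.mem_singleton]
      constructor
      · rintro rfl
        exact ⟨fun a ha => absurd ha List.not_mem_nil, rfl⟩
      · rintro ⟨-, h⟩
        exact List.eq_nil_of_length_eq_zero h
  | succ L ih =>
      simp only [wordsF, Finset.mem_image, Finset.mem_product, Finset.mem_range]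
      constructor
      · rintro ⟨⟨a, w'⟩, ⟨ha, hw'⟩, rfl⟩
        obtain ⟨h1, h2⟩ := ih.1 hw'
        refine ⟨?_, by simp [h2]⟩
        intro b hb
        rcases List.mem_cons.1 hb with h | h
        · omega
        · exact h1 b h
      · rintro ⟨h1, h2⟩
        cases w with
        | nil => simp at h2
        | cons a w' =>
            refine ⟨⟨a, w'⟩, ⟨h1 a (by simp), ih.2 ⟨fun b hb => h1 b (by simp [hb]), by simpa using h2⟩⟩, rfl⟩

section main7
set_option linter.unusedSectionVars false
set_option linter.unusedVariables false
set_option maxHeartbeats 1000000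
variable {n : ℕ} {ρ : ℕ → ℝ}
variable (hρ : ContractionVec n ρ) (S : TouchingIFS n ρ) (α β i₀ : ℕ)
  (hα : S.alphaRun α) (hβ : S.betaRun β) (hi₀ : S.touch i₀)
  (hρ1n : ρ (n - 1) ≤ ρ 0) (τ : ℕ → ℕ) (hτ : tauSpec ρ n τ)
variable {R c : ℝ} (hR0 : 0 < R) (hR1 : R < 1) (hR : ∀ i, i < n → ρ i ≤ R)
  (hc0 : 0 < c) (hc : ∀ i, i < n → c ≤ ρ i)

/-- the window scale -/
noncomputable def Mc (S : TouchingIFS n ρ) (α : ℕ) (c : ℝ) : ℝ :=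
  6 / (c * (g0R S α - g0L S α)) + 6

include hρ hα hc0 in
lemma Mc_facts : 6 ≤ Mc S α c ∧ 6 ≤ c * (g0R S α - g0L S α) * Mc S α c := by
  obtain ⟨-, -, hg3, -, -, -⟩ := g0_facts hρ S α hα
  have hg : 0 < c * (g0R S α - g0L S α) := by nlinarith
  constructor
  · rw [Mc]
    have : 0 ≤ 6 / (c * (g0R S α - g0L S α)) := by positivity
    linarith
  · rw [Mc]
    rw [mul_add, mul_div_cancel₀ _ (ne_of_gt hg)]
    nlinarith

include hρ hα hR0 hc0 in
lemma eps3 (k : ℕ) : 6 * R ^ k ≤ Mc S α c * R ^ k := by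
  have h6 := (Mc_facts hρ S α hα (c := c) hc0).1
  have := pow_pos hR0 k
  nlinarith

include hρ hα hR0 hc0 in
lemma eps4 (k : ℕ) : 6 * R ^ k ≤ c * (g0R S α - g0L S α) * (Mc S α c * R ^ k) := by
  have h6 := (Mc_facts hρ S α hα (c := c) hc0).2
  have := pow_pos hR0 k
  nlinarith

open Classical in
/-- fineness cut points -/
noncomputable def fcut (k i : ℕ) : ℝ :=
  if h : Mc S α c * R ^ k ≤ 1 then
    Classical.choose (fine_cut hρ S α β i₀ hα hβ hi₀ hρ1n τ hτ hR0 hR1 hR hc0 hc k h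
      (eps3 hρ S α hα hR0 hc0 k) (eps4 hρ S α hα hR0 hc0 k)
      ((i : ℝ) * (Mc S α c * R ^ k)))
  else 0

include hρ hα hβ hi₀ hρ1n hτ hR0 hR1 hR hc0 hc in
lemma fcut_spec (k i : ℕ) (h : Mc S α c * R ^ k ≤ 1) :
    fcut hρ S α β i₀ hα hβ hi₀ hρ1n τ hτ hR0 hR1 hR hc0 hc k i ∈
      Ioo ((i : ℝ) * (Mc S α c * R ^ k)) ((i : ℝ) * (Mc S α c * R ^ k) + Mc S α c * R ^ k) ∧
    fcut hρ S α β i₀ hα hβ hi₀ hρ1n τ hτ hR0 hR1 hR hc0 hc k i ∉ S.T ∧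
    ∀ (w : List ℕ) (m : ℕ), Gd n w → 1 ≤ m → k ≤ w.length + m →
      fcut hρ S α β i₀ hα hβ hi₀ hρ1n τ hτ hR0 hR1 hR hc0 hc k i ∉
        Icc (affWord ρ S.t w (cinf S β i₀ m)) (affWord ρ S.t w (csup S α i₀ τ m)) := by
  rw [fcut, dif_pos h]
  exact Classical.choose_spec (fine_cut hρ S α β i₀ hα hβ hi₀ hρ1n τ hτ hR0 hR1 hR hc0 hc k h
    (eps3 hρ S α hα hR0 hc0 k) (eps4 hρ S α hα hR0 hc0 k) _)

open Classical in
noncomputable def Fk (k : ℕ) : Finset ℝ :=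
  if Mc S α c * R ^ k ≤ 1 then
    (Finset.range (⌊1/(Mc S α c * R ^ k)⌋₊ + 2)).image
      (fcut hρ S α β i₀ hα hβ hi₀ hρ1n τ hτ hR0 hR1 hR hc0 hc k)
  else ∅

noncomputable def Pk (S : TouchingIFS n ρ) (α β i₀ : ℕ) (τ : ℕ → ℕ) (k : ℕ) : Finset ℝ :=
  (Finset.Icc 1 k).biUnion (fun m =>
    ((wordsF n (k-m)).image (fun w => pL S β i₀ w m)) ∪
    ((wordsF n (k-m)).image (fun w => pR S α i₀ τ w m)))

noncomputable def Gk (k : ℕ) : Finset ℝ :=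
  (Finset.range (k+1)).biUnion
    (fun j => Fk hρ S α β i₀ hα hβ hi₀ hρ1n τ hτ hR0 hR1 hR hc0 hc j ∪ Pk S α β i₀ τ j)

include hρ hα hβ hi₀ hρ1n hτ hR0 hR1 hR hc0 hc in
lemma Gk_mono {k : ℕ} :
    Gk hρ S α β i₀ hα hβ hi₀ hρ1n τ hτ hR0 hR1 hR hc0 hc k ⊆
      Gk hρ S α β i₀ hα hβ hi₀ hρ1n τ hτ hR0 hR1 hR hc0 hc (k+1) := by
  intro z hz
  rw [Gk, Finset.mem_biUnion] at hz ⊢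
  obtain ⟨j, hj, hzj⟩ := hz
  exact ⟨j, by simp at hj ⊢; omega, hzj⟩

include hρ hα hβ hi₀ hρ1n hτ hR0 hR1 hR hc0 hc in
/-- main property of the cut set: cuts avoid `T` and all designated hulls of level `≥ k` -/
lemma Gk_good {k : ℕ} {z : ℝ}
    (hz : z ∈ Gk hρ S α β i₀ hα hβ hi₀ hρ1n τ hτ hR0 hR1 hR hc0 hc k) :
    z ∉ S.T ∧
    ∀ (w : List ℕ) (m : ℕ), Gd n w → 1 ≤ m → k ≤ w.length + m →
      z ∉ Icc (affWord ρ S.t w (cinf S β i₀ m)) (affWord ρ S.t w (csup S α i₀ τ m)) := by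
  rw [Gk, Finset.mem_biUnion] at hz
  obtain ⟨j, hj, hzj⟩ := hz
  simp only [Finset.mem_range] at hj
  rcases Finset.mem_union.1 hzj with hzf | hzp
  · rw [Fk] at hzf
    split_ifs at hzf with hcond
    · obtain ⟨i, -, rfl⟩ := Finset.mem_image.1 hzf
      obtain ⟨-, h2, h3⟩ := fcut_spec hρ S α β i₀ hα hβ hi₀ hρ1n τ hτ hR0 hR1 hR hc0 hc j i hcond
      exact ⟨h2, fun w m hw hm hk => h3 w m hw hm (by omega)⟩
    · simp at hzf
  · rw [Pk, Finset.mem_biUnion] at hzp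
    obtain ⟨m', hm', hzm⟩ := hzp
    simp only [Finset.mem_Icc] at hm'
    rcases Finset.mem_union.1 hzm with hzl | hzr
    · obtain ⟨v, hv, rfl⟩ := Finset.mem_image.1 hzl
      obtain ⟨hgv, hlv⟩ := mem_wordsF.1 hv
      refine ⟨pL_not_T hρ S β i₀ hβ hi₀ hgv m', ?_⟩
      intro w m hw hm hk
      exact pL_avoid hρ S α β i₀ hα hβ hi₀ hρ1n τ hτ hgv hw hm'.1 hm (by omega)
    · obtain ⟨v, hv, rfl⟩ := Finset.mem_image.1 hzr
      obtain ⟨hgv, hlv⟩ := mem_wordsF.1 hv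
      refine ⟨pR_not_T hρ S α i₀ hα hi₀ τ hgv m', ?_⟩
      intro w m hw hm hk
      exact pR_avoid hρ S α β i₀ hα hβ hi₀ hρ1n τ hτ hgv hw hm'.1 hm (by omega)

include hρ hα hβ hi₀ hρ1n hτ hR0 hR1 hR hc0 hc in
/-- protectors of level-k designated sets are present in `Gk k` -/
lemma Gk_protect {k : ℕ} {w : List ℕ} {m : ℕ} (hw : Gd n w) (hm : 1 ≤ m)
    (hk : w.length + m = k) :
    pL S β i₀ w m ∈ Gk hρ S α β i₀ hα hβ hi₀ hρ1n τ hτ hR0 hR1 hR hc0 hc k ∧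
    pR S α i₀ τ w m ∈ Gk hρ S α β i₀ hα hβ hi₀ hρ1n τ hτ hR0 hR1 hR hc0 hc k := by
  have hmem : w ∈ wordsF n (k - m) := mem_wordsF.2 ⟨hw, by omega⟩
  have hmk : m ∈ Finset.Icc 1 k := Finset.mem_Icc.2 ⟨hm, by omega⟩
  constructor
  · rw [Gk, Finset.mem_biUnion]
    refine ⟨k, by simp, Finset.mem_union.2 (Or.inr ?_)⟩
    rw [Pk, Finset.mem_biUnion]
    exact ⟨m, hmk, Finset.mem_union.2 (Or.inl (Finset.mem_image_of_mem _ hmem))⟩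
  · rw [Gk, Finset.mem_biUnion]
    refine ⟨k, by simp, Finset.mem_union.2 (Or.inr ?_)⟩
    rw [Pk, Finset.mem_biUnion]
    exact ⟨m, hmk, Finset.mem_union.2 (Or.inr (Finset.mem_image_of_mem _ hmem))⟩

include hρ hα hβ hi₀ hρ1n hτ hR0 hR1 hR hc0 hc in
/-- fineness: between points of `[0,1]` at distance `> 3·McR^k` there is a cut -/
lemma Gk_fine {k : ℕ} (hcond : Mc S α c * R ^ k ≤ 1) {x y : ℝ}
    (hx0 : 0 ≤ x) (hx1 : x ≤ 1) (hxy : x + 3 * (Mc S α c * R ^ k) < y) :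
    ∃ z ∈ Gk hρ S α β i₀ hα hβ hi₀ hρ1n τ hτ hR0 hR1 hR hc0 hc k, x < z ∧ z < y := by
  set L := Mc S α c * R ^ k with hL
  have hL0 : 0 < L := by
    have h6 := (Mc_facts hρ S α hα (c := c) hc0).1
    have := pow_pos hR0 k
    nlinarith
  set i := ⌊x / L⌋₊ + 1 with hi
  have hfl : (⌊x / L⌋₊ : ℝ) ≤ x / L := Nat.floor_le (by positivity)
  have hfl2 : x / L < (⌊x / L⌋₊ : ℝ) + 1 := Nat.lt_floor_add_one _
  have hu1 : x < (i : ℝ) * L := by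
    have h' := (div_lt_iff₀ hL0).1 hfl2
    rw [hi]
    push_cast
    linarith
  have hu2 : (i : ℝ) * L ≤ x + L := by
    have h'' : (⌊x / L⌋₊ : ℝ) * L ≤ x := by
      have hm := mul_le_mul_of_nonneg_right hfl (le_of_lt hL0)
      rwa [div_mul_cancel₀ _ (ne_of_gt hL0)] at hm
    rw [hi]
    push_cast
    nlinarith
  have hiN : i ∈ Finset.range (⌊1/L⌋₊ + 2) := by
    rw [Finset.mem_range, hi]
    have : ⌊x / L⌋₊ ≤ ⌊1 / L⌋₊ := Nat.floor_le_floor (by gcongr)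
    omega
  obtain ⟨hio, hnt, hav⟩ := fcut_spec hρ S α β i₀ hα hβ hi₀ hρ1n τ hτ hR0 hR1 hR hc0 hc k i hcond
  refine ⟨fcut hρ S α β i₀ hα hβ hi₀ hρ1n τ hτ hR0 hR1 hR hc0 hc k i, ?_, ?_, ?_⟩
  · rw [Gk, Finset.mem_biUnion]
    refine ⟨k, by simp, Finset.mem_union.2 (Or.inl ?_)⟩
    rw [Fk, if_pos hcond]
    exact Finset.mem_image_of_mem _ hiN
  · rw [← hL] at hio
    have := hio.1
    linarith
  · rw [← hL] at hio
    have := hio.2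
    linarith

end main7
end StatementSix
namespace StatementSix
open Set

section main8
set_option linter.unusedSectionVars false
set_option linter.unusedVariables false
set_option maxHeartbeats 1000000
variable {n : ℕ} {ρ : ℕ → ℝ}
variable (hρ : ContractionVec n ρ) (S : TouchingIFS n ρ) (α β i₀ : ℕ)
  (hα : S.alphaRun α) (hβ : S.betaRun β) (hi₀ : S.touch i₀)
  (hρ1n : ρ (n - 1) ≤ ρ 0) (τ : ℕ → ℕ) (hτ : tauSpec ρ n τ)
variable {R c : ℝ} (hR0 : 0 < R) (hR1 : R < 1) (hR : ∀ i, i < n → ρ i ≤ R)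
  (hc0 : 0 < c) (hc : ∀ i, i < n → c ≤ ρ i)

/-- the class of `x` in the partition of `T` induced by the cut set `Gk k` -/
def cls (G : Finset ℝ) (T : Set ℝ) (x : ℝ) : Set ℝ :=
  {y ∈ T | ∀ g ∈ G, (g < x ↔ g < y)}

lemma cls_self {G : Finset ℝ} {T : Set ℝ} {x : ℝ} (hx : x ∈ T) : x ∈ cls G T x :=
  ⟨hx, fun _ _ => Iff.rfl⟩

lemma cls_subset_T {G : Finset ℝ} {T : Set ℝ} {x : ℝ} : cls G T x ⊆ T := fun _ h => h.1

lemma cls_eq_of_common {G : Finset ℝ} {T : Set ℝ} {x x' z : ℝ}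
    (hz : z ∈ cls G T x) (hz' : z ∈ cls G T x') : cls G T x = cls G T x' := by
  ext y
  simp only [cls, mem_sep_iff]
  constructor
  · rintro ⟨hyT, hy⟩
    exact ⟨hyT, fun g hg => ((hz'.2 g hg).trans (hz.2 g hg).symm).trans (hy g hg)⟩
  · rintro ⟨hyT, hy⟩
    exact ⟨hyT, fun g hg => ((hz.2 g hg).trans (hz'.2 g hg).symm).trans (hy g hg)⟩

lemma cls_compact {G : Finset ℝ} {T : Set ℝ} (hT : IsCompact T)
    (hG : ∀ g ∈ G, g ∉ T) (x : ℝ) : IsCompact (cls G T x) := by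
  have heq : cls G T x = T ∩ ⋂ g ∈ (G : Set ℝ), (if g < x then Ici g else Iic g) := by
    ext y
    simp only [cls, mem_sep_iff, mem_inter_iff, mem_iInter, Finset.mem_coe]
    constructor
    · rintro ⟨hyT, hy⟩
      refine ⟨hyT, fun g hg => ?_⟩
      split_ifs with h
      · exact le_of_lt ((hy g hg).1 h)
      · exact le_of_not_gt (fun hc' => h ((hy g hg).2 hc'))
    · rintro ⟨hyT, hy⟩
      refine ⟨hyT, fun g hg => ?_⟩
      have := hy g hg
      constructor
      · intro h
        rw [if_pos h] at this
        rcases lt_or_eq_of_le (show g ≤ y from this) with h' | h'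
        · exact h'
        · exact absurd (h' ▸ hyT) (hG g hg)
      · intro h
        by_contra hcon
        rw [if_neg hcon] at this
        exact absurd h (not_lt.2 this)
  rw [heq]
  refine hT.inter_right ?_
  refine isClosed_biInter (fun g hg => ?_)
  split_ifs
  · exact isClosed_Ici
  · exact isClosed_Iic

include hρ hα hβ hi₀ hρ1n hτ hR0 hR1 hR hc0 hc in
lemma cls_diam {k : ℕ} (hcond : Mc S α c * R ^ k ≤ 1) (x : ℝ) :
    ∀ y ∈ cls (Gk hρ S α β i₀ hα hβ hi₀ hρ1n τ hτ hR0 hR1 hR hc0 hc k) S.T x,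
    ∀ z ∈ cls (Gk hρ S α β i₀ hα hβ hi₀ hρ1n τ hτ hR0 hR1 hR hc0 hc k) S.T x,
      dist y z ≤ 3 * (Mc S α c * R ^ k) := by
  have key : ∀ y ∈ cls (Gk hρ S α β i₀ hα hβ hi₀ hρ1n τ hτ hR0 hR1 hR hc0 hc k) S.T x,
      ∀ z ∈ cls (Gk hρ S α β i₀ hα hβ hi₀ hρ1n τ hτ hR0 hR1 hR hc0 hc k) S.T x,
      y ≤ z → z - y ≤ 3 * (Mc S α c * R ^ k) := by
    rintro y ⟨hyT, hy⟩ z ⟨hzT, hz⟩ hyz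
    by_contra hcon
    push_neg at hcon
    have hy01 := T_subset_Icc hρ S hyT
    simp only [mem_Icc] at hy01
    obtain ⟨g, hgG, hg1, hg2⟩ := Gk_fine hρ S α β i₀ hα hβ hi₀ hρ1n τ hτ hR0 hR1 hR hc0 hc
      hcond hy01.1 hy01.2 (by linarith)
    have h1 := hy g hgG
    have h2 := hz g hgG
    have : g < y := h1.1 (h2.2 hg2)
    linarith
  intro y hy z hz
  rcases le_total y z with h | h
  · rw [Real.dist_eq, abs_of_nonpos (by linarith)]
    have := key y hy z hz h
    linarith
  · rw [Real.dist_eq, abs_of_nonneg (by linarith)]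
    have := key z hz y hy h
    linarith

include hρ hα hβ hi₀ hρ1n hτ hR0 hR1 hR hc0 hc in
/-- the designated set of level `k` is exactly the class of its left hull endpoint -/
lemma cls_designated {k : ℕ} {w : List ℕ} {m : ℕ} (hw : Gd n w) (hm : 1 ≤ m)
    (hk : w.length + m = k) :
    cls (Gk hρ S α β i₀ hα hβ hi₀ hρ1n τ hτ hR0 hR1 hR hc0 hc k) S.T
      (affWord ρ S.t w (cinf S β i₀ m)) = affWord ρ S.t w '' Cset S α β i₀ τ m := by
  set x₀ := affWord ρ S.t w (cinf S β i₀ m) with hx₀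
  have hx₀a : x₀ = aL S β i₀ w m := rfl
  obtain ⟨hpLG, hpRG⟩ := Gk_protect hρ S α β i₀ hα hβ hi₀ hρ1n τ hτ hR0 hR1 hR hc0 hc hw hm hk
  have hpl := pL_lt hρ S β i₀ hβ hi₀ hw m
  have hpr := pR_lt hρ S α i₀ hα hi₀ τ hw m
  have haa : aL S β i₀ w m ≤ aR S α i₀ τ w m := by
    rw [aL, aR]
    exact affWord_mono hρ hw (cinf_le_csup hρ S α β i₀ hα hβ hi₀ τ m)
  apply Subset.antisymm
  · rintro y ⟨hyT, hy⟩
    have h1 : pL S β i₀ w m < y := by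
      refine (hy _ hpLG).1 ?_
      rw [hx₀a]
      exact hpl.2
    have h2 : y ≤ pR S α i₀ τ w m := by
      by_contra hcon
      push_neg at hcon
      have : pR S α i₀ τ w m < x₀ := (hy _ hpRG).2 hcon
      rw [hx₀a] at this
      linarith [hpr.1]
    have : y ∈ S.T ∩ Icc (pL S β i₀ w m) (pR S α i₀ τ w m) := ⟨hyT, le_of_lt h1, h2⟩
    rwa [protector_slice hρ S α β i₀ hα hβ hi₀ τ hτ hw m] at this
  · intro y hy
    have hyT : y ∈ S.T := Cw_subset_T hρ S α β i₀ hα hβ hi₀ τ hw m hy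
    have hyI := Cw_subset_Icc hρ S α β i₀ hα hβ hi₀ τ hw m hy
    refine ⟨hyT, fun g hg => ?_⟩
    have hav := (Gk_good hρ S α β i₀ hα hβ hi₀ hρ1n τ hτ hR0 hR1 hR hc0 hc hg).2 w m hw hm
      (by omega)
    rw [mem_Icc, not_and_or, not_le, not_le] at hav
    have hx₀I : affWord ρ S.t w (cinf S β i₀ m) ≤ x₀ ∧
        x₀ ≤ affWord ρ S.t w (csup S α i₀ τ m) := ⟨le_of_eq hx₀, haa⟩
    rcases hav with h | h
    · constructor <;> intro _
      · exact lt_of_lt_of_le h hyI.1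
      · exact lt_of_lt_of_le h hx₀I.1
    · constructor <;> intro hcon
      · exact absurd hcon (not_lt.2 (le_of_lt (lt_of_le_of_lt hx₀I.2 h)))
      · exact absurd hcon (not_lt.2 (le_of_lt (lt_of_le_of_lt hyI.2 h)))

end main8
end StatementSix

open StatementSix Set in
theorem exists_convergent_partition_sequence' {n : ℕ} {ρ : ℕ → ℝ}
    (hρ : ContractionVec n ρ) (S : TouchingIFS n ρ) (α β i₀ : ℕ)
    (hα : S.alphaRun α) (hβ : S.betaRun β) (hi₀ : S.touch i₀)
    (hρ1n : ρ (n - 1) ≤ ρ 0) (τ : ℕ → ℕ) (hτ : tauSpec ρ n τ) :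
    ∃ 𝒯 : ℕ → Set (Set ℝ),
      (∀ k, 1 ≤ k → (𝒯 k).Finite ∧ (∀ A ∈ 𝒯 k, IsCompact A ∧ A ⊆ S.T) ∧
        ⋃₀ 𝒯 k = S.T ∧ ∀ A ∈ 𝒯 k, ∀ B ∈ 𝒯 k, A ≠ B → A ∩ B = ∅) ∧
      (∀ k, 1 ≤ k → ∀ B ∈ 𝒯 (k + 1), ∃ A ∈ 𝒯 k, B ⊆ A) ∧
      (∀ ε : ℝ, 0 < ε → ∃ K : ℕ, ∀ k, K ≤ k → ∀ A ∈ 𝒯 k, Metric.diam A ≤ ε) ∧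
      (∀ k, 1 ≤ k → ∀ (w : List ℕ) (m : ℕ), (∀ a ∈ w, a < n) → 1 ≤ m →
        w.length + m = k → affWord ρ S.t w '' Cset S α β i₀ τ m ∈ 𝒯 k) := by
  classical
  obtain ⟨R, hR0, hR1, hR⟩ := exists_R hρ
  obtain ⟨c, hc0, hc1, hc⟩ := exists_rmin hρ
  set G : ℕ → Finset ℝ := Gk hρ S α β i₀ hα hβ hi₀ hρ1n τ hτ hR0 hR1 hR hc0 hc with hG
  refine ⟨fun k => {A | ∃ x ∈ S.T, A = cls (G k) S.T x}, ?_, ?_, ?_, ?_⟩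
  · intro k hk
    refine ⟨?_, ?_, ?_, ?_⟩
    · -- finiteness
      have hfin : (((G k).powerset : Finset (Finset ℝ)) : Set (Finset ℝ)).Finite :=
        Finset.finite_toSet _
      apply Set.Finite.subset (hfin.image
        (fun s : Finset ℝ => {y ∈ S.T | ∀ g ∈ G k, (g ∈ s ↔ g < y)}))
      rintro A ⟨x, hx, rfl⟩
      refine ⟨(G k).filter (fun g => g < x), ?_, ?_⟩
      · simp only [Finset.mem_coe, Finset.mem_powerset]
        exact Finset.filter_subset _ _
      · ext y
        simp only [cls, mem_sep_iff, Finset.mem_filter]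
        constructor
        · rintro ⟨hyT, hy⟩
          exact ⟨hyT, fun g hg => ⟨fun h => (hy g hg).1 ⟨hg, h⟩, fun h => ((hy g hg).2 h).2⟩⟩
        · rintro ⟨hyT, hy⟩
          exact ⟨hyT, fun g hg => ⟨fun h => (hy g hg).1 h.2, fun h => ⟨hg, (hy g hg).2 h⟩⟩⟩
    · rintro A ⟨x, hx, rfl⟩
      exact ⟨cls_compact S.compactT
        (fun g hg => (Gk_good hρ S α β i₀ hα hβ hi₀ hρ1n τ hτ hR0 hR1 hR hc0 hc hg).1) x,
        cls_subset_T⟩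
    · apply Subset.antisymm
      · rintro y ⟨A, ⟨x, hx, rfl⟩, hy⟩
        exact cls_subset_T hy
      · intro x hx
        exact ⟨cls (G k) S.T x, ⟨x, hx, rfl⟩, cls_self hx⟩
    · rintro A ⟨x, hx, rfl⟩ B ⟨x', hx', rfl⟩ hne
      by_contra hcon
      rw [← Ne, ← nonempty_iff_ne_empty] at hcon
      obtain ⟨z, hz1, hz2⟩ := hcon
      exact hne (cls_eq_of_common hz1 hz2)
  · rintro k hk B ⟨x, hx, rfl⟩
    refine ⟨cls (G k) S.T x, ⟨x, hx, rfl⟩, ?_⟩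
    rintro y ⟨hyT, hy⟩
    exact ⟨hyT, fun g hg =>
      hy g (Gk_mono hρ S α β i₀ hα hβ hi₀ hρ1n τ hτ hR0 hR1 hR hc0 hc hg)⟩
  · intro ε hε
    have hMc0 : 0 < Mc S α c := by
      have := (Mc_facts hρ S α hα (c := c) hc0).1
      linarith
    have htd : Filter.Tendsto (fun k : ℕ => Mc S α c * R ^ k) Filter.atTop (nhds 0) := by
      have h1 := tendsto_pow_atTop_nhds_zero_of_lt_one (le_of_lt hR0) hR1
      have h2 := h1.const_mul (Mc S α c)
      simpa using h2
    have hev : ∀ᶠ k in Filter.atTop, Mc S α c * R ^ k < min (ε/3) 1 :=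
      htd.eventually_lt_const (by positivity)
    obtain ⟨K, hK⟩ := Filter.eventually_atTop.1 hev
    refine ⟨K, fun k hkK A hA => ?_⟩
    obtain ⟨x, hx, rfl⟩ := hA
    have hcond : Mc S α c * R ^ k ≤ 1 := le_of_lt (lt_of_lt_of_le (hK k hkK) (min_le_right _ _))
    apply Metric.diam_le_of_forall_dist_le (le_of_lt hε)
    intro y hy z hz
    have h3 := cls_diam hρ S α β i₀ hα hβ hi₀ hρ1n τ hτ hR0 hR1 hR hc0 hc hcond x y hy z hz
    have h4 : Mc S α c * R ^ k < ε/3 := lt_of_lt_of_le (hK k hkK) (min_le_left _ _)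
    linarith
  · intro k hk w m hw hm hlen
    refine ⟨affWord ρ S.t w (cinf S β i₀ m),
      word_mem_T hρ S hw (cinf_mem_T hρ S β i₀ hβ hi₀ m), ?_⟩
    exact (cls_designated hρ S α β i₀ hα hβ hi₀ hρ1n τ hτ hR0 hR1 hR hc0 hc hw hm hlen).symm

/-- there is a convergent partition sequence `{𝒯_k}` of `T` with
`𝒞_k ⊆ 𝒯_k` for all `k ≥ 1`. -/
theorem exists_convergent_partition_sequence {n : ℕ} {ρ : ℕ → ℝ}
    (hρ : ContractionVec n ρ) (S : TouchingIFS n ρ) (α β i₀ : ℕ)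
    (hα : S.alphaRun α) (hβ : S.betaRun β) (hi₀ : S.touch i₀)
    (hρ1n : ρ (n - 1) ≤ ρ 0) (τ : ℕ → ℕ) (hτ : tauSpec ρ n τ) :
    ∃ 𝒯 : ℕ → Set (Set ℝ),
      (∀ k, 1 ≤ k → (𝒯 k).Finite ∧ (∀ A ∈ 𝒯 k, IsCompact A ∧ A ⊆ S.T) ∧
        ⋃₀ 𝒯 k = S.T ∧ ∀ A ∈ 𝒯 k, ∀ B ∈ 𝒯 k, A ≠ B → A ∩ B = ∅) ∧
      (∀ k, 1 ≤ k → ∀ B ∈ 𝒯 (k + 1), ∃ A ∈ 𝒯 k, B ⊆ A) ∧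
      (∀ ε : ℝ, 0 < ε → ∃ K : ℕ, ∀ k, K ≤ k → ∀ A ∈ 𝒯 k, Metric.diam A ≤ ε) ∧
      (∀ k, 1 ≤ k → ∀ (w : List ℕ) (m : ℕ), (∀ a ∈ w, a < n) → 1 ≤ m →
        w.length + m = k → affWord ρ S.t w '' Cset S α β i₀ τ m ∈ 𝒯 k) := by
  exact exists_convergent_partition_sequence' hρ S α β i₀ hα hβ hi₀ hρ1n τ hτ
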